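/- arXiv:2601.14067 — 5 statements merged into one kernel-verified Lean document; each statement's English description precedes it below -/
import Mathlib

section
/- Let f : ℝ² → ℝ be a bounded continuous function satisfying f(x) = ∫_{ℝ²} π⁻¹ · exp(-‖x - y‖²) · f(y) dy for every x ∈ ℝ². Then f is constant, i.e., there exists c ∈ ℝ with f(x) = c for all x ∈ ℝ². -/
open MeasureTheory Real

noncomputable section
namespace ChoquetAux

abbrev E := EuclideanSpace ℝ (Fin 2)

/-- Gaussian kernel with inverse-variance-like parameter `a`. -/
def K (a : ℝ) (u : E) : ℝ := a / π * rexp (-a * ‖u‖ ^ 2)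

lemma K_nonneg {a : ℝ} (ha : 0 < a) (u : E) : 0 ≤ K a u := by
  unfold K; positivity

lemma K_cont (a : ℝ) : Continuous (K a) := by
  unfold K; fun_prop

lemma K_neg (a : ℝ) (u : E) : K a (-u) = K a u := by simp [K]

lemma integrable_gauss {a : ℝ} (ha : 0 < a) :
    Integrable (fun y : E => rexp (-a * ‖y‖ ^ 2)) := by
  have h := GaussianFourier.integrable_cexp_neg_mul_sq_norm_add
    (V := E) (b := (a : ℂ)) (by simpa using ha) 0 0
  have := h.norm
  refine this.congr (Filter.Eventually.of_forall fun y => ?_)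
  simp [Complex.norm_exp]
  left; norm_cast

lemma integrable_K {a : ℝ} (ha : 0 < a) : Integrable (K a) :=
  ((integrable_gauss ha).const_mul (a / π))

lemma integrable_K_sub {a : ℝ} (ha : 0 < a) (x : E) :
    Integrable (fun y : E => K a (x - y)) :=
  (integrable_K ha).comp_sub_left x

lemma integral_K {a : ℝ} (ha : 0 < a) : ∫ y : E, K a y = 1 := by
  unfold K
  rw [integral_const_mul]
  have h := GaussianFourier.integral_rexp_neg_mul_sq_norm (V := E) ha
  rw [h, finrank_euclideanSpace_fin]
  rw [show ((2 : ℕ) : ℝ) / 2 = (1:ℝ) by norm_num, Real.rpow_one]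
  field_simp

lemma integral_K_sub {a : ℝ} (ha : 0 < a) (x : E) :
    ∫ y : E, K a (x - y) = 1 := by
  rw [integral_sub_left_eq_self (K a) volume x, integral_K ha]

lemma weight_bound {a s : ℝ} (ha : 0 < a) (hs : 0 ≤ s) :
    s * rexp (-a * s ^ 2) ≤ (Real.sqrt a)⁻¹ * rexp (-(a / 2) * s ^ 2) := by
  have hsa : (0:ℝ) < Real.sqrt a := Real.sqrt_pos.mpr ha
  have key : Real.sqrt a * s ≤ rexp (a / 2 * s ^ 2) := by
    nlinarith [Real.add_one_le_exp (a / 2 * s ^ 2), sq_nonneg (Real.sqrt a * s - 1),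
      Real.sq_sqrt ha.le, Real.sqrt_nonneg a, sq_nonneg s, mul_pow (Real.sqrt a) s 2]
  have h3 : s * rexp (-(a / 2) * s ^ 2) ≤ (Real.sqrt a)⁻¹ := by
    have : s ≤ (Real.sqrt a)⁻¹ * rexp (a / 2 * s ^ 2) := by
      calc s = (Real.sqrt a)⁻¹ * (Real.sqrt a * s) := by field_simp
        _ ≤ (Real.sqrt a)⁻¹ * rexp (a / 2 * s ^ 2) :=
          mul_le_mul_of_nonneg_left key (inv_nonneg.mpr hsa.le)
    rw [show (-(a/2) * s ^ 2) = -(a/2 * s^2) by ring, Real.exp_neg, ← div_eq_mul_inv,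
      div_le_iff₀ (Real.exp_pos _)]
    calc s ≤ (Real.sqrt a)⁻¹ * rexp (a / 2 * s ^ 2) := this
      _ = (Real.sqrt a)⁻¹ * rexp (a / 2 * s ^ 2) := rfl
  have hsplit : rexp (-a * s ^ 2) = rexp (-(a/2) * s ^ 2) * rexp (-(a/2) * s ^ 2) := by
    rw [← Real.exp_add]; ring_nf
  rw [hsplit, ← mul_assoc]
  exact mul_le_mul_of_nonneg_right h3 (Real.exp_pos _).le

lemma K_weight_le {a : ℝ} (ha : 0 < a) (y : E) :
    ‖y‖ * K a y ≤ (2 / Real.sqrt a) * K (a / 2) y := by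
  have hπ : (0:ℝ) < π := pi_pos
  have hsa : (0:ℝ) < Real.sqrt a := Real.sqrt_pos.mpr ha
  have h := weight_bound ha (norm_nonneg y) (s := ‖y‖)
  unfold K
  have hr : 2 / Real.sqrt a * (a / 2 / π * rexp (-(a/2) * ‖y‖ ^ 2))
      = a / π * ((Real.sqrt a)⁻¹ * rexp (-(a/2) * ‖y‖ ^ 2)) := by
    field_simp
  rw [hr, show ‖y‖ * (a / π * rexp (-a * ‖y‖ ^ 2)) = a / π * (‖y‖ * rexp (-a * ‖y‖ ^ 2)) by ring]
  exact mul_le_mul_of_nonneg_left h (by positivity)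

lemma integrable_norm_K {a : ℝ} (ha : 0 < a) :
    Integrable (fun y : E => ‖y‖ * K a y) := by
  refine Integrable.mono' (((integrable_K (half_pos ha)).const_mul (2 / Real.sqrt a)))
    ((continuous_norm.mul (K_cont a)).aestronglyMeasurable) (Filter.Eventually.of_forall fun y => ?_)
  rw [Real.norm_of_nonneg (mul_nonneg (norm_nonneg y) (K_nonneg ha y))]
  exact K_weight_le ha y

lemma integral_norm_K_le {a : ℝ} (ha : 0 < a) :
    ∫ y : E, ‖y‖ * K a y ≤ 2 / Real.sqrt a := by
  calc ∫ y : E, ‖y‖ * K a y ≤ ∫ y : E, (2 / Real.sqrt a) * K (a / 2) y :=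
        integral_mono (integrable_norm_K ha)
          ((integrable_K (half_pos ha)).const_mul _) (fun y => K_weight_le ha y)
    _ = 2 / Real.sqrt a := by rw [integral_const_mul, integral_K (half_pos ha), mul_one]

lemma exponent_identity {a b : ℝ} (ha : 0 < a) (hb : 0 < b) (x z y : E) :
    a * ‖x - y‖ ^ 2 + b * ‖y - z‖ ^ 2
      = (a + b) * ‖y - (a + b)⁻¹ • (a • x + b • z)‖ ^ 2 + a * b / (a + b) * ‖x - z‖ ^ 2 := by
  have hab : a + b ≠ 0 := by positivity
  simp only [← real_inner_self_eq_norm_sq]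
  simp only [inner_sub_left, inner_sub_right, inner_add_left, inner_add_right,
    real_inner_smul_left, real_inner_smul_right]
  rw [real_inner_comm y x, real_inner_comm z x, real_inner_comm z y]
  field_simp
  ring

lemma K_conv {a b : ℝ} (ha : 0 < a) (hb : 0 < b) (x z : E) :
    ∫ y : E, K a (x - y) * K b (y - z) = K (a * b / (a + b)) (x - z) := by
  have hab : (0:ℝ) < a + b := by positivity
  have hπ : (0:ℝ) < π := pi_pos
  set m := (a + b)⁻¹ • (a • x + b • z) with hm
  have heq : ∀ y : E, K a (x - y) * K b (y - z)
      = (a / π * (b / π) * rexp (-(a * b / (a + b)) * ‖x - z‖ ^ 2))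
        * rexp (-(a + b) * ‖y - m‖ ^ 2) := by
    intro y
    unfold K
    rw [show a / π * rexp (-a * ‖x - y‖ ^ 2) * (b / π * rexp (-b * ‖y - z‖ ^ 2))
        = a / π * (b / π) * rexp (-a * ‖x - y‖ ^ 2 + -b * ‖y - z‖ ^ 2) by
      rw [Real.exp_add]; ring]
    rw [show -a * ‖x - y‖ ^ 2 + -b * ‖y - z‖ ^ 2
        = -(a * ‖x - y‖ ^ 2 + b * ‖y - z‖ ^ 2) by ring,
      exponent_identity ha hb x z y,
      show -((a + b) * ‖y - m‖ ^ 2 + a * b / (a + b) * ‖x - z‖ ^ 2)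
        = -(a * b / (a + b)) * ‖x - z‖ ^ 2 + -(a + b) * ‖y - m‖ ^ 2 by ring,
      Real.exp_add]
    ring
  simp only [heq]
  rw [integral_const_mul,
    integral_sub_right_eq_self (fun w : E => rexp (-(a + b) * ‖w‖ ^ 2)) m,
    GaussianFourier.integral_rexp_neg_mul_sq_norm (V := E) hab, finrank_euclideanSpace_fin,
    show ((2 : ℕ) : ℝ) / 2 = (1:ℝ) by norm_num, Real.rpow_one]
  unfold K
  field_simp

variable {f : E → ℝ}

lemma integrable_K_mul_f {t : ℝ} (ht : 0 < t) (hcont : Continuous f)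
    {C : ℝ} (hC : ∀ x, |f x| ≤ C) (x : E) :
    Integrable (fun y : E => K t (x - y) * f y) := by
  have h : Integrable (fun y : E => f y * K t (x - y)) :=
    (integrable_K_sub ht x).bdd_mul hcont.aestronglyMeasurable
      (c := C) (Filter.Eventually.of_forall fun y => by simpa [Real.norm_eq_abs] using hC y)
  exact h.congr (Filter.Eventually.of_forall fun y => mul_comm _ _)

lemma step {a b : ℝ} (ha : 0 < a) (hb : 0 < b)
    (hcont : Continuous f) {C : ℝ} (hC : ∀ x, |f x| ≤ C)
    (Ha : ∀ x, f x = ∫ y : E, K a (x - y) * f y)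
    (Hb : ∀ y, f y = ∫ z : E, K b (y - z) * f z) :
    ∀ x, f x = ∫ z : E, K (a * b / (a + b)) (x - z) * f z := by
  intro x
  have hC0 : 0 ≤ C := le_trans (abs_nonneg (f x)) (hC x)
  set F : E × E → ℝ := fun p => K a (x - p.1) * (K b (p.1 - p.2) * f p.2) with hF
  have hFcont : Continuous F :=
    (((K_cont a).comp (continuous_const.sub continuous_fst)).mul
      (((K_cont b).comp (continuous_fst.sub continuous_snd)).mul
        (hcont.comp continuous_snd)))
  have hFint : Integrable F (volume.prod volume) := by
    rw [integrable_prod_iff hFcont.aestronglyMeasurable]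
    constructor
    · refine Filter.Eventually.of_forall fun y => ?_
      simpa only [hF] using (integrable_K_mul_f hb hcont hC y).const_mul (K a (x - y))
    · refine Integrable.mono' ((integrable_K_sub ha x).const_mul C)
        (hFcont.norm.aestronglyMeasurable.integral_prod_right')
        (Filter.Eventually.of_forall fun y => ?_)
      have h1 : ∫ z : E, ‖F (y, z)‖ = K a (x - y) * ∫ z : E, ‖K b (y - z) * f z‖ := by
        rw [← integral_const_mul]
        congr 1 with z
        simp only [hF, norm_mul, Real.norm_of_nonneg (K_nonneg ha (x - y)), mul_assoc]
      have h2 : ∫ z : E, ‖K b (y - z) * f z‖ ≤ C := by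
        calc ∫ z : E, ‖K b (y - z) * f z‖ ≤ ∫ z : E, K b (y - z) * C := by
              refine integral_mono ((integrable_K_mul_f hb hcont hC y).norm)
                ((integrable_K_sub hb y).mul_const C) fun z => ?_
              rw [norm_mul, Real.norm_of_nonneg (K_nonneg hb _)]
              exact mul_le_mul_of_nonneg_left
                (by simpa [Real.norm_eq_abs] using hC z) (K_nonneg hb _)
          _ = C := by rw [integral_mul_const, integral_K_sub hb, one_mul]
      have hnn : (0:ℝ) ≤ ∫ z : E, ‖F (y, z)‖ := integral_nonneg fun z => norm_nonneg _
      rw [Real.norm_of_nonneg hnn, h1]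
      calc K a (x - y) * ∫ z : E, ‖K b (y - z) * f z‖ ≤ K a (x - y) * C :=
            mul_le_mul_of_nonneg_left h2 (K_nonneg ha _)
        _ = C * K a (x - y) := mul_comm _ _
  calc f x = ∫ y : E, K a (x - y) * f y := Ha x
    _ = ∫ y : E, K a (x - y) * (∫ z : E, K b (y - z) * f z) := by
        congr 1 with y; rw [← Hb y]
    _ = ∫ y : E, ∫ z : E, K a (x - y) * (K b (y - z) * f z) := by
        congr 1 with y; rw [integral_const_mul]
    _ = ∫ z : E, ∫ y : E, K a (x - y) * (K b (y - z) * f z) :=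
        integral_integral_swap hFint
    _ = ∫ z : E, (∫ y : E, K a (x - y) * K b (y - z)) * f z := by
        congr 1 with z
        rw [← integral_mul_const]
        congr 1 with y; ring
    _ = ∫ z : E, K (a * b / (a + b)) (x - z) * f z := by
        congr 1 with z; rw [K_conv ha hb]

lemma exp_diff_le (u v : ℝ) :
    |rexp (-u) - rexp (-v)| ≤ |u - v| * (rexp (-u) + rexp (-v)) := by
  have key : ∀ s t : ℝ, s ≤ t → rexp (-s) - rexp (-t) ≤ (t - s) * (rexp (-t) + rexp (-s)) := by
    intro s t hst
    have hsplit : rexp (-t) = rexp (-s) * rexp (s - t) := by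
      rw [← Real.exp_add]; ring_nf
    nlinarith [Real.add_one_le_exp (s - t), Real.exp_pos (-s), Real.exp_pos (-t)]
  rcases le_total u v with h | h
  · rw [abs_of_nonneg (by simp [Real.exp_le_exp]; linarith), abs_of_nonpos (by linarith)]
    have := key u v h
    linarith
  · rw [abs_of_nonpos (by simp [Real.exp_le_exp]; linarith), abs_of_nonneg (by linarith)]
    have := key v u h
    linarith

local notation "⟪" x ", " y "⟫" => @inner ℝ E _ x y

lemma K_diff_le {a : ℝ} (ha : 0 < a) (x y : E) :
    |K a (x - y) - K a (0 - y)| ≤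
      a * (‖x‖ ^ 2 + 2 * ‖x‖ * ‖y‖) * (K a (x - y) + K a (0 - y)) := by
  have h0 : ‖(0:E) - y‖ = ‖y‖ := by rw [zero_sub, norm_neg]
  unfold K
  rw [h0, show (-a * ‖x - y‖ ^ 2) = -(a * ‖x - y‖ ^ 2) by ring,
    show (-a * ‖y‖ ^ 2) = -(a * ‖y‖ ^ 2) by ring]
  set u := a * ‖x - y‖ ^ 2 with hu
  set v := a * ‖y‖ ^ 2 with hv
  have h1 := exp_diff_le u v
  have h2 : |u - v| ≤ a * (‖x‖ ^ 2 + 2 * ‖x‖ * ‖y‖) := by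
    rw [show u - v = a * (‖x - y‖ ^ 2 - ‖y‖ ^ 2) by rw [hu, hv]; ring,
      abs_mul, abs_of_pos ha]
    have hni : ‖x - y‖ ^ 2 - ‖y‖ ^ 2 = ‖x‖ ^ 2 - 2 * ⟪x, y⟫ := by
      rw [norm_sub_sq_real]; ring
    rw [hni]
    refine mul_le_mul_of_nonneg_left ?_ ha.le
    calc |‖x‖ ^ 2 - 2 * ⟪x, y⟫| ≤ |‖x‖ ^ 2| + |2 * ⟪x, y⟫| := abs_sub _ _
      _ ≤ ‖x‖ ^ 2 + 2 * (‖x‖ * ‖y‖) := by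
          rw [abs_of_nonneg (by positivity), abs_mul, abs_of_nonneg (by norm_num : (0:ℝ) ≤ 2)]
          exact add_le_add le_rfl
            (mul_le_mul_of_nonneg_left (abs_real_inner_le_norm x y) (by norm_num))
      _ = ‖x‖ ^ 2 + 2 * ‖x‖ * ‖y‖ := by ring
  have hπ : (0:ℝ) < π := pi_pos
  calc |a / π * rexp (-u) - a / π * rexp (-v)|
      = a / π * |rexp (-u) - rexp (-v)| := by
        rw [← mul_sub, abs_mul, abs_of_pos (by positivity)]
    _ ≤ a / π * (|u - v| * (rexp (-u) + rexp (-v))) :=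
        mul_le_mul_of_nonneg_left h1 (by positivity)
    _ ≤ a / π * ((a * (‖x‖ ^ 2 + 2 * ‖x‖ * ‖y‖)) * (rexp (-u) + rexp (-v))) :=
        mul_le_mul_of_nonneg_left
          (mul_le_mul_of_nonneg_right h2 (by positivity)) (by positivity)
    _ = a * (‖x‖ ^ 2 + 2 * ‖x‖ * ‖y‖) * (a / π * rexp (-u) + a / π * rexp (-v)) := by ring

lemma integrable_norm_K_sub {a : ℝ} (ha : 0 < a) (x : E) :
    Integrable (fun y : E => ‖y‖ * K a (x - y)) := by
  refine Integrable.mono'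
    (((integrable_K_sub ha x).const_mul ‖x‖).add ((integrable_norm_K ha).comp_sub_left x))
    ((continuous_norm.mul ((K_cont a).comp (continuous_const.sub continuous_id))).aestronglyMeasurable)
    (Filter.Eventually.of_forall fun y => ?_)
  rw [Real.norm_of_nonneg (mul_nonneg (norm_nonneg y) (K_nonneg ha _))]
  have hy : ‖y‖ ≤ ‖x‖ + ‖x - y‖ := by
    have := norm_sub_le x (x - y)
    simpa [sub_sub_cancel] using this
  calc ‖y‖ * K a (x - y) ≤ (‖x‖ + ‖x - y‖) * K a (x - y) :=
        mul_le_mul_of_nonneg_right hy (K_nonneg ha _)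
    _ = ‖x‖ * K a (x - y) + ‖x - y‖ * K a (x - y) := by ring

lemma integral_norm_K_sub_le {a : ℝ} (ha : 0 < a) (x : E) :
    ∫ y : E, ‖y‖ * K a (x - y) ≤ ‖x‖ + 2 / Real.sqrt a := by
  have hint : Integrable (fun y : E => ‖x‖ * K a (x - y) + ‖x - y‖ * K a (x - y)) :=
    ((integrable_K_sub ha x).const_mul ‖x‖).add ((integrable_norm_K ha).comp_sub_left x)
  calc ∫ y : E, ‖y‖ * K a (x - y)
      ≤ ∫ y : E, (‖x‖ * K a (x - y) + ‖x - y‖ * K a (x - y)) := by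
        refine integral_mono (integrable_norm_K_sub ha x) hint fun y => ?_
        have hy : ‖y‖ ≤ ‖x‖ + ‖x - y‖ := by
          have := norm_sub_le x (x - y)
          simpa [sub_sub_cancel] using this
        calc ‖y‖ * K a (x - y) ≤ (‖x‖ + ‖x - y‖) * K a (x - y) :=
              mul_le_mul_of_nonneg_right hy (K_nonneg ha _)
          _ = ‖x‖ * K a (x - y) + ‖x - y‖ * K a (x - y) := by ring
    _ = (∫ y : E, ‖x‖ * K a (x - y)) + ∫ y : E, ‖x - y‖ * K a (x - y) :=
        integral_add ((integrable_K_sub ha x).const_mul ‖x‖)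
          ((integrable_norm_K ha).comp_sub_left x)
    _ ≤ ‖x‖ + 2 / Real.sqrt a := by
        gcongr
        · rw [integral_const_mul, integral_K_sub ha, mul_one]
        · rw [integral_sub_left_eq_self (fun w : E => ‖w‖ * K a w) volume x]
          exact integral_norm_K_le ha

lemma diff_int_le {a : ℝ} (ha : 0 < a) (x : E) :
    ∫ y : E, |K a (x - y) - K a (0 - y)| ≤ 4 * a * ‖x‖ ^ 2 + 8 * Real.sqrt a * ‖x‖ := by
  have Ia : Integrable (fun y : E => |K a (x - y) - K a (0 - y)|) :=
    ((integrable_K_sub ha x).sub (integrable_K_sub ha 0)).abs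
  have IM : Integrable (fun y : E =>
      a * ‖x‖ ^ 2 * K a (x - y) + a * ‖x‖ ^ 2 * K a (0 - y)
        + (2 * a * ‖x‖ * (‖y‖ * K a (x - y)) + 2 * a * ‖x‖ * (‖y‖ * K a (0 - y)))) :=
    (((integrable_K_sub ha x).const_mul _).add ((integrable_K_sub ha 0).const_mul _)).add
      (((integrable_norm_K_sub ha x).const_mul _).add ((integrable_norm_K_sub ha 0).const_mul _))
  calc ∫ y : E, |K a (x - y) - K a (0 - y)|
      ≤ ∫ y : E, (a * ‖x‖ ^ 2 * K a (x - y) + a * ‖x‖ ^ 2 * K a (0 - y)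
          + (2 * a * ‖x‖ * (‖y‖ * K a (x - y)) + 2 * a * ‖x‖ * (‖y‖ * K a (0 - y)))) := by
        refine integral_mono Ia IM fun y => ?_
        calc |K a (x - y) - K a (0 - y)|
            ≤ a * (‖x‖ ^ 2 + 2 * ‖x‖ * ‖y‖) * (K a (x - y) + K a (0 - y)) := K_diff_le ha x y
          _ = a * ‖x‖ ^ 2 * K a (x - y) + a * ‖x‖ ^ 2 * K a (0 - y)
              + (2 * a * ‖x‖ * (‖y‖ * K a (x - y)) + 2 * a * ‖x‖ * (‖y‖ * K a (0 - y))) := by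
              ring
    _ = a * ‖x‖ ^ 2 * (∫ y : E, K a (x - y)) + a * ‖x‖ ^ 2 * (∫ y : E, K a (0 - y))
        + (2 * a * ‖x‖ * ∫ y : E, ‖y‖ * K a (x - y))
        + (2 * a * ‖x‖ * ∫ y : E, ‖y‖ * K a (0 - y)) := by
        have IMa : Integrable (fun y : E => a * ‖x‖ ^ 2 * K a (x - y)) := by
          exact (integrable_K_sub ha x).const_mul _
        have IMb : Integrable (fun y : E => a * ‖x‖ ^ 2 * K a (0 - y)) := by
          exact (integrable_K_sub ha 0).const_mul _
        have IMc : Integrable (fun y : E => 2 * a * ‖x‖ * (‖y‖ * K a (x - y))) := by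
          exact (integrable_norm_K_sub ha x).const_mul _
        have IMd : Integrable (fun y : E => 2 * a * ‖x‖ * (‖y‖ * K a (0 - y))) := by
          exact (integrable_norm_K_sub ha 0).const_mul _
        have IM1 : Integrable (fun y : E =>
            a * ‖x‖ ^ 2 * K a (x - y) + a * ‖x‖ ^ 2 * K a (0 - y)) := IMa.add IMb
        have IM2 : Integrable (fun y : E =>
            2 * a * ‖x‖ * (‖y‖ * K a (x - y)) + 2 * a * ‖x‖ * (‖y‖ * K a (0 - y))) :=
          IMc.add IMd
        rw [integral_add IM1 IM2, integral_add IMa IMb, integral_add IMc IMd,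
          integral_const_mul, integral_const_mul, integral_const_mul, integral_const_mul]
        ring
    _ ≤ a * ‖x‖ ^ 2 * 1 + a * ‖x‖ ^ 2 * 1
        + (2 * a * ‖x‖ * (‖x‖ + 2 / Real.sqrt a)) + (2 * a * ‖x‖ * (2 / Real.sqrt a)) := by
        have h3 := integral_norm_K_sub_le ha x
        have h4 : ∫ y : E, ‖y‖ * K a (0 - y) ≤ 2 / Real.sqrt a := by
          have := integral_norm_K_sub_le ha 0
          simpa using this
        gcongr
        · rw [integral_K_sub ha]
        · rw [integral_K_sub ha]
    _ = 4 * a * ‖x‖ ^ 2 + 8 * Real.sqrt a * ‖x‖ := by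
        have hs : Real.sqrt a > 0 := Real.sqrt_pos.mpr ha
        have hdiv : a / Real.sqrt a = Real.sqrt a := Real.div_sqrt
        field_simp
        nlinarith [Real.sq_sqrt ha.le, sq_nonneg (Real.sqrt a), norm_nonneg x]

lemma iterate_fix (hcont : Continuous f) {C : ℝ} (hC : ∀ x, |f x| ≤ C)
    (H1 : ∀ x, f x = ∫ y : E, K 1 (x - y) * f y) :
    ∀ n : ℕ, ∀ x, f x = ∫ y : E, K (1 / ((n : ℝ) + 1)) (x - y) * f y := by
  intro n
  induction n with
  | zero => simpa using H1
  | succ n ih =>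
    have hpos : (0:ℝ) < 1 / ((n : ℝ) + 1) := by positivity
    have h := step hpos one_pos hcont hC ih H1
    have harith : (1 / ((n : ℝ) + 1)) * 1 / (1 / ((n : ℝ) + 1) + 1)
        = 1 / (((n : ℕ) + 1 : ℕ) + 1 : ℝ) := by
      have hn : ((n : ℝ) + 1) ≠ 0 := by positivity
      push_cast
      field_simp
      ring
    intro x
    rw [show (((n + 1 : ℕ) : ℝ) + 1) = (((n : ℕ) + 1 : ℕ) + 1 : ℝ) by push_cast; ring]
    rw [← harith]
    exact h x


end ChoquetAux
end

open ChoquetAux Filter in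
/-- If a bounded continuous function `f : ℝ² → ℝ` equals its own convolution with the
Gaussian kernel `g(u) = π⁻¹ exp(-‖u‖²)`, then `f` is constant. -/
theorem stmt0 (f : EuclideanSpace ℝ (Fin 2) → ℝ)
    (hcont : Continuous f) (hbdd : ∃ C : ℝ, ∀ x, |f x| ≤ C)
    (hfix : ∀ x : EuclideanSpace ℝ (Fin 2),
      f x = ∫ y : EuclideanSpace ℝ (Fin 2), π⁻¹ * Real.exp (-‖x - y‖ ^ 2) * f y) :
    ∃ c : ℝ, ∀ x, f x = c := by
  obtain ⟨C, hC⟩ := hbdd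
  have hC0 : (0:ℝ) ≤ C := le_trans (abs_nonneg _) (hC 0)
  have H1 : ∀ x : E, f x = ∫ y : E, K 1 (x - y) * f y := by
    intro x
    rw [hfix x]
    congr 1 with y
    simp [ChoquetAux.K, one_div, neg_one_mul]
  have Hn := iterate_fix hcont hC H1
  refine ⟨f 0, fun x => ?_⟩
  have key : ∀ n : ℕ, |f x - f 0| ≤
      (4 * (1 / ((n:ℝ) + 1)) * ‖x‖ ^ 2 + 8 * Real.sqrt (1 / ((n:ℝ) + 1)) * ‖x‖) * C := by
    intro n
    set a : ℝ := 1 / ((n:ℝ) + 1) with hadef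
    have ha : 0 < a := by positivity
    have hsub : f x - f 0 = ∫ y : E, (K a (x - y) - K a (0 - y)) * f y := by
      rw [Hn n x, Hn n 0, ← integral_sub (integrable_K_mul_f ha hcont hC x)
        (integrable_K_mul_f ha hcont hC 0)]
      congr 1 with y
      ring
    have Idiff : Integrable (fun y : E => |K a (x - y) - K a (0 - y)|) :=
      ((integrable_K_sub ha x).sub (integrable_K_sub ha 0)).abs
    have Iprod : Integrable (fun y : E => (K a (x - y) - K a (0 - y)) * f y) :=
      ((integrable_K_mul_f ha hcont hC x).sub (integrable_K_mul_f ha hcont hC 0)).congr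
        (Filter.Eventually.of_forall fun y => by simp only [Pi.sub_apply]; ring)
    rw [hsub]
    calc |∫ y : E, (K a (x - y) - K a (0 - y)) * f y|
        ≤ ∫ y : E, |(K a (x - y) - K a (0 - y)) * f y| := by
          have h := norm_integral_le_integral_norm
            (fun y : E => (K a (x - y) - K a (0 - y)) * f y) (μ := volume)
          simpa only [Real.norm_eq_abs] using h
      _ ≤ ∫ y : E, |K a (x - y) - K a (0 - y)| * C := by
          refine integral_mono Iprod.abs (Idiff.mul_const C) fun y => ?_
          rw [abs_mul]
          exact mul_le_mul_of_nonneg_left (hC y) (abs_nonneg _)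
      _ = (∫ y : E, |K a (x - y) - K a (0 - y)|) * C := integral_mul_const _ _
      _ ≤ (4 * a * ‖x‖ ^ 2 + 8 * Real.sqrt a * ‖x‖) * C :=
          mul_le_mul_of_nonneg_right (diff_int_le ha x) hC0
  have h1 : Tendsto (fun n : ℕ => 1 / ((n:ℝ) + 1)) atTop (nhds 0) :=
    tendsto_one_div_add_atTop_nhds_zero_nat
  have h2 : Tendsto (fun n : ℕ => Real.sqrt (1 / ((n:ℝ) + 1))) atTop (nhds 0) := by
    have := (Real.continuous_sqrt.tendsto 0).comp h1
    simpa only [Function.comp_def, Real.sqrt_zero] using this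
  have hlim : Tendsto (fun n : ℕ =>
      (4 * (1 / ((n:ℝ) + 1)) * ‖x‖ ^ 2 + 8 * Real.sqrt (1 / ((n:ℝ) + 1)) * ‖x‖) * C)
      atTop (nhds 0) := by
    have := (((h1.const_mul (4:ℝ)).mul_const (‖x‖ ^ 2)).add
      ((h2.const_mul (8:ℝ)).mul_const ‖x‖)).mul_const C
    simpa using this
  have hle : |f x - f 0| ≤ 0 := ge_of_tendsto' hlim key
  have : f x - f 0 = 0 := abs_nonpos_iff.mp hle
  linarith
end

section
/- Let H be a separable complex Hilbert space with a Hilbert (orthonormal) basis (e_n)_{n ∈ ℕ}, and for z ∈ ℂ let c(z) be the coherent vector. Let f : ℂ → ℂ be a bounded continuous function such that for all φ, ψ ∈ H, ∫_ℂ f(z) · ⟪φ, c(z)⟫ · ⟪c(z), ψ⟫ dz = 0, the integral taken with respect to Lebesgue measure on ℂ ≅ ℝ². Then f = 0. (The operator-valued transform f ↦ ∫_ℂ f(z) |c(z)⟩⟨c(z)| dz is injective on bounded continuous functions.) -/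
open MeasureTheory Real
open scoped ComplexInnerProductSpace

/-- The coherent vector `c(z) = exp(-|z|²/2) Σₙ (zⁿ/√(n!)) eₙ` associated with a
Hilbert basis `(eₙ)` of a separable complex Hilbert space. -/
noncomputable def coherent {H : Type*} [NormedAddCommGroup H] [InnerProductSpace ℂ H]
    [CompleteSpace H] (e : HilbertBasis ℕ ℂ H) (z : ℂ) : H :=
  Complex.exp (-(‖z‖ : ℂ) ^ 2 / 2) • ∑' n : ℕ, (z ^ n / (Real.sqrt n.factorial : ℂ)) • e n

open Complex
open scoped FourierTransform RealInnerProductSpace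

lemma coh_memℓp (z : ℂ) : Memℓp (fun n : ℕ => z ^ n / (Real.sqrt n.factorial : ℂ)) 2 := by
  apply memℓp_gen
  have h : Summable (fun n : ℕ => (‖z‖ ^ 2) ^ n / n.factorial) :=
    Real.summable_pow_div_factorial _
  apply h.congr
  intro n
  have h1 : (0:ℝ) ≤ (n.factorial : ℝ) := Nat.cast_nonneg _
  rw [ENNReal.toReal_ofNat, norm_div, norm_pow, Complex.norm_real, Real.norm_eq_abs,
    _root_.abs_of_nonneg (Real.sqrt_nonneg _), Real.rpow_two, div_pow, Real.sq_sqrt h1]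
  ring

noncomputable def cohCoeffs (z : ℂ) : lp (fun _ : ℕ => ℂ) 2 := ⟨_, coh_memℓp z⟩

lemma coherent_eq {H : Type*} [NormedAddCommGroup H] [InnerProductSpace ℂ H]
    [CompleteSpace H] (e : HilbertBasis ℕ ℂ H) (z : ℂ) :
    coherent e z = Complex.exp (-(‖z‖ : ℂ) ^ 2 / 2) • e.repr.symm (cohCoeffs z) := by
  rw [coherent]
  congr 1
  exact (e.hasSum_repr_symm (cohCoeffs z)).tsum_eq

lemma inner_coherent {H : Type*} [NormedAddCommGroup H] [InnerProductSpace ℂ H]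
    [CompleteSpace H] (e : HilbertBasis ℕ ℂ H) (a z : ℂ) :
    ⟪coherent e a, coherent e z⟫ =
      Complex.exp (-(‖a‖ : ℂ) ^ 2 / 2 + -(‖z‖ : ℂ) ^ 2 / 2 + (starRingEnd ℂ) a * z) := by
  rw [coherent_eq, coherent_eq, inner_smul_left, inner_smul_right,
    LinearIsometryEquiv.inner_map_map]
  have htsum : (inner ℂ (cohCoeffs a) (cohCoeffs z) : ℂ) = Complex.exp ((starRingEnd ℂ) a * z) := by
    rw [lp.inner_eq_tsum]
    have : ∀ n : ℕ, (inner ℂ (cohCoeffs a n) (cohCoeffs z n) : ℂ) = ((starRingEnd ℂ) a * z) ^ n / n.factorial := by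
      intro n
      have h1 : (0:ℝ) ≤ (n.factorial : ℝ) := Nat.cast_nonneg _
      rw [RCLike.inner_apply']
      show (starRingEnd ℂ) (a ^ n / (Real.sqrt n.factorial : ℂ)) * (z ^ n / (Real.sqrt n.factorial : ℂ))
        = ((starRingEnd ℂ) a * z) ^ n / n.factorial
      rw [map_div₀, map_pow, Complex.conj_ofReal, mul_pow]
      rw [div_mul_div_comm, ← Complex.ofReal_mul, Real.mul_self_sqrt h1]
      norm_cast
    rw [tsum_congr this]
    rw [Complex.exp_eq_exp_ℂ, NormedSpace.exp_eq_tsum_div]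
  rw [htsum, ← Complex.exp_conj]
  have : (starRingEnd ℂ) (-(‖a‖ : ℂ) ^ 2 / 2) = -(‖a‖ : ℂ) ^ 2 / 2 := by
    simp [map_div₀, Complex.conj_ofNat]
  rw [this, ← Complex.exp_add, ← Complex.exp_add]
  ring_nf

/-- The operator-valued transform `f ↦ ∫_ℂ f(z) |c(z)⟩⟨c(z)| dz` is injective on bounded
continuous functions: if all matrix elements of the transform of `f` vanish, then `f = 0`. -/
theorem stmt5 {H : Type*} [NormedAddCommGroup H] [InnerProductSpace ℂ H] [CompleteSpace H]
    (e : HilbertBasis ℕ ℂ H) (f : ℂ → ℂ)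
    (hcont : Continuous f) (hbdd : ∃ C : ℝ, ∀ z, ‖f z‖ ≤ C)
    (hker : ∀ φ ψ : H,
      ∫ z : ℂ, f z * ⟪φ, coherent e z⟫ * ⟪coherent e z, ψ⟫ = 0) :
    f = 0 := by
  -- Step 1: key integral identity
  have key : ∀ a b : ℂ,
      ∫ z : ℂ, f z * Complex.exp (-(‖z‖ : ℂ) ^ 2 +
        ((starRingEnd ℂ) a * z + (starRingEnd ℂ) z * b)) = 0 := by
    intro a b
    have h := hker (coherent e a) (coherent e b)
    have heq : ∀ z : ℂ, f z * ⟪coherent e a, coherent e z⟫ * ⟪coherent e z, coherent e b⟫ =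
        Complex.exp (-(‖a‖ : ℂ) ^ 2 / 2 + -(‖b‖ : ℂ) ^ 2 / 2) *
          (f z * Complex.exp (-(‖z‖ : ℂ) ^ 2 +
            ((starRingEnd ℂ) a * z + (starRingEnd ℂ) z * b))) := by
      intro z
      rw [inner_coherent, inner_coherent, mul_assoc, ← Complex.exp_add,
        show (-(‖a‖ : ℂ) ^ 2 / 2 + -(‖z‖ : ℂ) ^ 2 / 2 + (starRingEnd ℂ) a * z) +
            (-(‖z‖ : ℂ) ^ 2 / 2 + -(‖b‖ : ℂ) ^ 2 / 2 + (starRingEnd ℂ) z * b) =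
          (-(‖a‖ : ℂ) ^ 2 / 2 + -(‖b‖ : ℂ) ^ 2 / 2) +
            (-(‖z‖ : ℂ) ^ 2 + ((starRingEnd ℂ) a * z + (starRingEnd ℂ) z * b)) from by ring,
        Complex.exp_add]
      ring
    rw [MeasureTheory.integral_congr_ae (Filter.Eventually.of_forall heq),
      MeasureTheory.integral_const_mul] at h
    rcases mul_eq_zero.mp h with h' | h'
    · exact absurd h' (Complex.exp_ne_zero _)
    · exact h'
  -- Step 2: the Fourier transform of g vanishes
  set g : ℂ → ℂ := fun z => f z * Complex.exp (-(‖z‖ : ℂ) ^ 2) with hg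
  have hFg : 𝓕 g = 0 := by
    funext w
    rw [Real.fourier_eq']
    rw [show (0 : ℂ → ℂ) w = 0 from rfl]
    rw [← key ((π : ℂ) * Complex.I * w) (-((π : ℂ) * Complex.I * w))]
    congr 1
    funext z
    simp only [smul_eq_mul]
    have hin : (((@inner ℝ ℂ _ z w : ℝ)) : ℂ) =
        ((starRingEnd ℂ) z * w + z * (starRingEnd ℂ) w) / 2 := by
      rw [Complex.inner, Complex.re_eq_add_conj]
      simp [map_mul]
      ring
    have hphase : ((-2 * π * (@inner ℝ ℂ _ z w : ℝ) : ℝ) : ℂ) * Complex.I =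
        (starRingEnd ℂ) ((π : ℂ) * Complex.I * w) * z +
          (starRingEnd ℂ) z * -((π : ℂ) * Complex.I * w) := by
      push_cast
      rw [hin]
      simp only [map_mul, Complex.conj_I, Complex.conj_ofReal]
      ring
    rw [← hphase, Complex.exp_add]
    ring
  -- Step 3: g is integrable
  obtain ⟨C, hC⟩ := hbdd
  have hexp : Integrable (fun z : ℂ => Complex.exp (-(‖z‖ : ℂ) ^ 2)) := by
    have := GaussianFourier.integrable_cexp_neg_mul_sq_norm_add (b := 1)
      (by norm_num) 0 (0 : ℂ)
    simpa using this
  have hgint : Integrable g := by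
    apply Integrable.bdd_mul hexp hcont.aestronglyMeasurable (Filter.Eventually.of_forall hC)
  have hgcont : Continuous g := by
    apply hcont.mul
    exact Complex.continuous_exp.comp (by continuity)
  -- Step 4: Fourier inversion
  have hinv := hgcont.fourierInv_fourier_eq hgint (by rw [hFg]; exact integrable_zero _ _ _)
  rw [hFg] at hinv
  have h0 : (𝓕⁻ (0 : ℂ → ℂ)) = 0 := by
    funext w
    rw [Real.fourierInv_eq]
    simp
  rw [h0] at hinv
  funext z
  have := congrFun hinv.symm z
  simp only [Pi.zero_apply, hg] at this ⊢
  rcases mul_eq_zero.mp this with h' | h'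
  · exact h'
  · exact absurd h' (Complex.exp_ne_zero _)
end

section
/- Let H be a separable complex Hilbert space, (Ω, 𝒜) a standard Borel space, μ a measure on (Ω, 𝒜), and T : B(H) → L^∞(Ω, μ; ℂ) a positive linear map with T(1) = 1 (the constant-one class). Let D ⊆ B(H) be a norm-closed, norm-separable linear subspace closed under taking adjoints, and let C be a countable dense subset of D. Then there exist a μ-null set N ∈ 𝒜, for each A ∈ C a measurable representative f_A : Ω → ℂ of the equivalence class T(A), and for each λ ∈ Ω ∖ N a state ω_λ on B(H), such that f_A(λ) = ω_λ(A) for every A ∈ C and every λ ∈ Ω ∖ N. -/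
open MeasureTheory
open scoped ComplexInnerProductSpace ComplexOrder


section StateLemma

variable {H : Type*} [NormedAddCommGroup H] [InnerProductSpace ℂ H] [CompleteSpace H]

lemma aux_im_eq_zero (ψ : (H →L[ℂ] H) →L[ℂ] ℂ) (hψ : ‖ψ‖ ≤ 1) (h1 : ψ 1 = 1)
    (B : H →L[ℂ] H) (hB : IsSelfAdjoint B) : (ψ B).im = 0 := by
  have hb : ∀ t : ℝ, ‖ψ B + t * Complex.I‖ ^ 2 ≤ ‖B‖ ^ 2 + t ^ 2 := by
    intro t
    set c : ℂ := (t : ℂ) * Complex.I with hc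
    set X : H →L[ℂ] H := B + c • 1 with hX
    have hstar : star X = B - c • 1 := by
      rw [hX, star_add, star_smul, hB.star_eq, star_one]
      have h9 : star c = -c := by
        rw [hc, Complex.star_def, map_mul, Complex.conj_I, Complex.conj_ofReal]; ring
      rw [h9, neg_smul, sub_eq_add_neg]
    have hmul : star X * X = B * B + ((t : ℂ) ^ 2) • 1 := by
      have hcc : c * c = -((t : ℂ) ^ 2) := by
        rw [hc]; ring_nf; rw [Complex.I_sq]; ring
      rw [hstar, hX]
      have hmm : (B - c • 1) * (B + c • 1) = B * B - (c * c) • 1 := by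
        simp only [sub_mul, mul_add, mul_smul_comm, smul_mul_assoc, one_mul, mul_one]
        module
      rw [hmm, hcc, neg_smul, sub_neg_eq_add]
    have hXn : ‖X‖ ^ 2 ≤ ‖B‖ ^ 2 + t ^ 2 := by
      have h2 : ‖star X * X‖ = ‖X‖ * ‖X‖ := CStarRing.norm_star_mul_self
      have h3 : ‖star X * X‖ ≤ ‖B‖ ^ 2 + t ^ 2 := by
        rw [hmul]
        refine (norm_add_le _ _).trans ?_
        have h4 : ‖B * B‖ ≤ ‖B‖ * ‖B‖ := norm_mul_le _ _
        have h5 : ‖((t : ℂ) ^ 2) • (1 : H →L[ℂ] H)‖ ≤ t ^ 2 := by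
          rw [norm_smul]
          have h6 : ‖(1 : H →L[ℂ] H)‖ ≤ 1 := by
            rw [ContinuousLinearMap.one_def]; exact ContinuousLinearMap.norm_id_le
          have h7 : ‖(t : ℂ) ^ 2‖ = t ^ 2 := by
            rw [norm_pow, Complex.norm_real]
            rw [Real.norm_eq_abs, sq_abs]
          rw [h7]
          nlinarith [sq_nonneg t]
        nlinarith
      nlinarith [h2, norm_nonneg X]
    have happ : ψ X = ψ B + (t : ℂ) * Complex.I := by
      rw [hX, map_add, ψ.map_smul, h1, smul_eq_mul, mul_one, hc]
    have hop : ‖ψ X‖ ≤ ‖X‖ := by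
      refine (ψ.le_opNorm X).trans ?_
      nlinarith [norm_nonneg X, ψ.opNorm_nonneg]
    rw [happ] at hop
    nlinarith [norm_nonneg (ψ B + (t : ℂ) * Complex.I), norm_nonneg X]
  by_contra h
  set z := ψ B with hz
  have key : ∀ t : ℝ, 2 * z.im * t ≤ ‖B‖ ^ 2 := by
    intro t
    have h1' := hb t
    have hn : ‖z + (t : ℂ) * Complex.I‖ ^ 2 = z.re ^ 2 + (z.im + t) ^ 2 := by
      rw [← Complex.normSq_eq_norm_sq, Complex.normSq_apply]
      simp
      ring
    rw [hn] at h1'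
    nlinarith [sq_nonneg z.re, sq_nonneg z.im]
  have h2 : (2 : ℝ) * z.im ≠ 0 := by
    simp only [ne_eq, mul_eq_zero]
    push_neg
    exact ⟨two_ne_zero, h⟩
  have := key ((‖B‖ ^ 2 + 1) / (2 * z.im))
  rw [mul_div_cancel₀ _ h2] at this
  linarith

lemma aux_state (ψ : (H →L[ℂ] H) →L[ℂ] ℂ) (hψ : ‖ψ‖ ≤ 1) (h1 : ψ 1 = 1)
    {A : H →L[ℂ] H} (hA : A.IsPositive) : 0 ≤ ψ A := by
  have him : (ψ A).im = 0 := aux_im_eq_zero ψ hψ h1 A hA.isSelfAdjoint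
  by_cases h0 : A = 0
  · simp [h0]
  · set r : ℝ := ‖A‖ with hr
    have hrpos : 0 < r := norm_pos_iff.mpr h0
    have hA0 : (0 : H →L[ℂ] H) ≤ ((r⁻¹ : ℝ) : ℂ) • A := by
      rw [ContinuousLinearMap.nonneg_iff_isPositive, ContinuousLinearMap.isPositive_def']
      constructor
      · rw [IsSelfAdjoint, star_smul, hA.isSelfAdjoint.star_eq, Complex.star_def,
          Complex.conj_ofReal]
      · intro x
        have : ContinuousLinearMap.reApplyInnerSelf (((r⁻¹ : ℝ) : ℂ) • A) x
            = r⁻¹ * ContinuousLinearMap.reApplyInnerSelf A x := by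
          simp only [ContinuousLinearMap.reApplyInnerSelf, ContinuousLinearMap.smul_apply,
            inner_smul_left, Complex.conj_ofReal, RCLike.re_to_complex,
            Complex.re_ofReal_mul]
        rw [this]
        exact mul_nonneg (by positivity) (hA.2 x)
    have hn1 : ‖((r⁻¹ : ℝ) : ℂ) • A‖ ≤ 1 := by
      rw [norm_smul, Complex.norm_real, Real.norm_eq_abs, abs_of_pos (by positivity)]
      rw [← hr, inv_mul_cancel₀ (ne_of_gt hrpos)]
    have h3 : ((r⁻¹ : ℝ) : ℂ) • A ≤ 1 := (CStarAlgebra.norm_le_one_iff_of_nonneg _ hA0).mp hn1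
    have h4 : (0 : H →L[ℂ] H) ≤ 1 - ((r⁻¹ : ℝ) : ℂ) • A := sub_nonneg.mpr h3
    have h5 : (1 : H →L[ℂ] H) - ((r⁻¹ : ℝ) : ℂ) • A ≤ 1 := sub_le_self _ hA0
    have h6 : ‖(1 : H →L[ℂ] H) - ((r⁻¹ : ℝ) : ℂ) • A‖ ≤ 1 :=
      (CStarAlgebra.norm_le_one_iff_of_nonneg _ h4).mpr h5
    have h7 : ‖ψ ((1 : H →L[ℂ] H) - ((r⁻¹ : ℝ) : ℂ) • A)‖ ≤ 1 := by
      refine (ψ.le_opNorm _).trans ?_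
      nlinarith [ψ.opNorm_nonneg, norm_nonneg ((1 : H →L[ℂ] H) - ((r⁻¹ : ℝ) : ℂ) • A)]
    have h8 : ψ ((1 : H →L[ℂ] H) - ((r⁻¹ : ℝ) : ℂ) • A)
        = 1 - ((r⁻¹ : ℝ) : ℂ) * ψ A := by
      rw [map_sub, ψ.map_smul, h1, smul_eq_mul]
    have hψA : ψ A = (((ψ A).re : ℝ) : ℂ) := by
      apply Complex.ext <;> simp [him]
    rw [h8, hψA] at h7
    set a : ℝ := (ψ A).re with ha
    have h9 : ‖(1 : ℂ) - ((r⁻¹ : ℝ) : ℂ) * ((a : ℝ) : ℂ)‖ = |1 - r⁻¹ * a| := by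
      rw [show (1 : ℂ) - ((r⁻¹ : ℝ) : ℂ) * ((a : ℝ) : ℂ) = (((1 - r⁻¹ * a : ℝ)) : ℂ) by
        push_cast; ring]
      rw [Complex.norm_real, Real.norm_eq_abs]
    rw [h9] at h7
    have h10 : 0 ≤ r⁻¹ * a := by
      rw [abs_le] at h7
      linarith [h7.2]
    have h11 : 0 ≤ a := by
      by_contra hlt
      push_neg at hlt
      nlinarith [inv_pos.mpr hrpos]
    rw [hψA]
    exact_mod_cast Complex.zero_le_real.mpr h11

end StateLemma


section CoeFnLemmas

variable {Ω : Type*} [MeasurableSpace Ω] {μ : Measure Ω}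
variable {M : Type*} [AddCommGroup M] [Module ℂ M]

lemma aux_coeFn_comb (T : M →ₗ[ℂ] Lp ℂ ⊤ μ) (a b : ℂ) (P Q : M) :
    (T (a • P + b • Q) : Ω → ℂ) =ᵐ[μ]
      fun x => a * (T P : Ω → ℂ) x + b * (T Q : Ω → ℂ) x := by
  rw [map_add, T.map_smul, T.map_smul]
  filter_upwards [Lp.coeFn_add (a • T P) (b • T Q), Lp.coeFn_smul a (T P),
    Lp.coeFn_smul b (T Q)] with x h1 h2 h3
  simp only [Pi.add_apply, Pi.smul_apply, smul_eq_mul] at h1 h2 h3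
  rw [h1, h2, h3]

lemma aux_coeFn_sum {α : Type*} (T : M →ₗ[ℂ] Lp ℂ ⊤ μ) (s : Finset α) (c : α → ℂ)
    (v : α → M) :
    (T (∑ i ∈ s, c i • v i) : Ω → ℂ) =ᵐ[μ]
      fun x => ∑ i ∈ s, c i * (T (v i) : Ω → ℂ) x := by
  classical
  induction s using Finset.induction_on with
  | empty =>
      rw [Finset.sum_empty, map_zero]
      filter_upwards [Lp.coeFn_zero ℂ ⊤ μ] with x hx
      simpa using hx
  | insert a s' h ih =>
      rw [Finset.sum_insert h, map_add, T.map_smul]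
      filter_upwards [Lp.coeFn_add (c a • T (v a)) (T (∑ i ∈ s', c i • v i)),
        Lp.coeFn_smul (c a) (T (v a)), ih] with x h1 h2 h3
      simp only [Pi.add_apply, Pi.smul_apply, smul_eq_mul] at h1 h2 h3
      rw [h1, h2, h3, Finset.sum_insert h]

end CoeFnLemmas

section DenseQ

lemma aux_dense_qc : Dense (Set.range (fun q : ℚ × ℚ => ((q.1 : ℂ) + (q.2 : ℂ) * Complex.I))) := by
  intro z
  rw [Metric.mem_closure_iff]
  intro ε hε
  obtain ⟨q1, hq1⟩ := exists_rat_near z.re (by positivity : (0:ℝ) < ε/3)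
  obtain ⟨q2, hq2⟩ := exists_rat_near z.im (by positivity : (0:ℝ) < ε/3)
  refine ⟨(q1 : ℂ) + (q2 : ℂ) * Complex.I, ⟨(q1, q2), rfl⟩, ?_⟩
  rw [dist_eq_norm]
  have h1 : (z - ((q1 : ℂ) + (q2 : ℂ) * Complex.I)).re = z.re - q1 := by simp
  have h2 : (z - ((q1 : ℂ) + (q2 : ℂ) * Complex.I)).im = z.im - q2 := by simp
  calc ‖z - ((q1 : ℂ) + (q2 : ℂ) * Complex.I)‖
      ≤ |(z - ((q1 : ℂ) + (q2 : ℂ) * Complex.I)).re| +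
        |(z - ((q1 : ℂ) + (q2 : ℂ) * Complex.I)).im| :=
        Complex.norm_le_abs_re_add_abs_im _
    _ < ε := by rw [h1, h2]; linarith

end DenseQ


section Main

variable {H : Type*} [NormedAddCommGroup H] [InnerProductSpace ℂ H] [CompleteSpace H]
variable {Ω : Type*} [MeasurableSpace Ω] {μ : Measure Ω}

/-- selfadjoint elements have a.e. real values bounded by the norm -/
lemma aux_sa (T : (H →L[ℂ] H) →ₗ[ℂ] Lp ℂ ⊤ μ)
    (hTpos : ∀ A : H →L[ℂ] H, A.IsPositive → ∀ᵐ x ∂μ, 0 ≤ (T A : Ω → ℂ) x)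
    (hT1 : (T 1 : Ω → ℂ) =ᵐ[μ] fun _ => 1)
    (Y : H →L[ℂ] H) (hY : IsSelfAdjoint Y) :
    ∀ᵐ x ∂μ, ((T Y : Ω → ℂ) x).im = 0 ∧ |((T Y : Ω → ℂ) x).re| ≤ ‖Y‖ := by
  have halg : algebraMap ℝ (H →L[ℂ] H) ‖Y‖ = ((‖Y‖ : ℝ) : ℂ) • (1 : H →L[ℂ] H) := by
    rw [IsScalarTower.algebraMap_apply ℝ ℂ (H →L[ℂ] H), Algebra.algebraMap_eq_smul_one]
    norm_num
  have hplus : (0 : H →L[ℂ] H) ≤ algebraMap ℝ _ ‖Y‖ + Y := by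
    have h := neg_le_iff_add_nonneg.mp (IsSelfAdjoint.neg_algebraMap_norm_le_self hY)
    rwa [add_comm] at h
  have hminus : (0 : H →L[ℂ] H) ≤ algebraMap ℝ _ ‖Y‖ + (-1 : ℂ) • Y := by
    have h := sub_nonneg.mpr (IsSelfAdjoint.le_algebraMap_norm_self hY)
    rwa [sub_eq_add_neg, ← neg_one_smul ℂ Y] at h
  have hP := hTpos _ ((ContinuousLinearMap.nonneg_iff_isPositive _).mp hplus)
  have hM := hTpos _ ((ContinuousLinearMap.nonneg_iff_isPositive _).mp hminus)
  have hcP : (T (algebraMap ℝ _ ‖Y‖ + Y) : Ω → ℂ) =ᵐ[μ]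
      fun x => ((‖Y‖ : ℝ) : ℂ) * (T 1 : Ω → ℂ) x + 1 * (T Y : Ω → ℂ) x := by
    have := aux_coeFn_comb T ((‖Y‖ : ℝ) : ℂ) 1 (1 : H →L[ℂ] H) Y
    rwa [one_smul, ← halg] at this
  have hcM : (T (algebraMap ℝ _ ‖Y‖ + (-1 : ℂ) • Y) : Ω → ℂ) =ᵐ[μ]
      fun x => ((‖Y‖ : ℝ) : ℂ) * (T 1 : Ω → ℂ) x + (-1) * (T Y : Ω → ℂ) x := by
    have := aux_coeFn_comb T ((‖Y‖ : ℝ) : ℂ) (-1) (1 : H →L[ℂ] H) Y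
    rwa [← halg] at this
  filter_upwards [hP, hM, hcP, hcM, hT1] with x h1 h2 h3 h4 h5
  rw [h3] at h1
  rw [h4] at h2
  rw [h5] at h1 h2
  simp only [one_mul, neg_one_mul, mul_one] at h1 h2
  set z := (T Y : Ω → ℂ) x with hz
  rw [Complex.le_def] at h1 h2
  simp only [Complex.add_re, Complex.add_im, Complex.ofReal_re, Complex.ofReal_im,
    Complex.neg_re, Complex.neg_im, Complex.zero_re, Complex.zero_im] at h1 h2
  constructor
  · linarith [h1.2, h2.2]
  · rw [abs_le]; constructor <;> linarith [h1.1, h2.1]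


/-- a.e. norm bound for arbitrary elements -/
lemma aux_bound (T : (H →L[ℂ] H) →ₗ[ℂ] Lp ℂ ⊤ μ)
    (hTpos : ∀ A : H →L[ℂ] H, A.IsPositive → ∀ᵐ x ∂μ, 0 ≤ (T A : Ω → ℂ) x)
    (hT1 : (T 1 : Ω → ℂ) =ᵐ[μ] fun _ => 1)
    (Y : H →L[ℂ] H) :
    ∀ᵐ x ∂μ, ‖(T Y : Ω → ℂ) x‖ ≤ ‖Y‖ := by
  obtain ⟨Aop, hAop⟩ : ∃ A, A = (2 : ℂ)⁻¹ • (Y + ContinuousLinearMap.adjoint Y) := ⟨_, rfl⟩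
  obtain ⟨Bop, hBop⟩ : ∃ B, B = (Complex.I * (2 : ℂ)⁻¹) • (ContinuousLinearMap.adjoint Y - Y) :=
    ⟨_, rfl⟩
  have hYdn : ‖ContinuousLinearMap.adjoint Y‖ = ‖Y‖ :=
    LinearIsometryEquiv.norm_map ContinuousLinearMap.adjoint Y
  have h2c : star ((2 : ℂ)⁻¹) = (2 : ℂ)⁻¹ := by simp
  have hsaA : IsSelfAdjoint Aop := by
    rw [IsSelfAdjoint, hAop, star_smul, star_add, ContinuousLinearMap.star_eq_adjoint,
      ContinuousLinearMap.star_eq_adjoint, ContinuousLinearMap.adjoint_adjoint, h2c, add_comm]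
  have hsaB : IsSelfAdjoint Bop := by
    have hIc : star (Complex.I * (2 : ℂ)⁻¹) = -(Complex.I * (2 : ℂ)⁻¹) := by
      simp [Complex.star_def, map_mul, Complex.conj_I]
    rw [IsSelfAdjoint, hBop, star_smul, star_sub, ContinuousLinearMap.star_eq_adjoint,
      ContinuousLinearMap.star_eq_adjoint, ContinuousLinearMap.adjoint_adjoint, hIc,
      neg_smul, ← smul_neg, neg_sub]
  have hYdec : Y = Aop + Complex.I • Bop := by
    rw [hAop, hBop, smul_smul]
    rw [show Complex.I * (Complex.I * (2 : ℂ)⁻¹) = -(2 : ℂ)⁻¹ by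
      rw [← mul_assoc, Complex.I_mul_I]; ring]
    module
  have hA := aux_sa T hTpos hT1 Aop hsaA
  have hB := aux_sa T hTpos hT1 Bop hsaB
  have hcY : (T Y : Ω → ℂ) =ᵐ[μ]
      fun x => 1 * (T Aop : Ω → ℂ) x + Complex.I * (T Bop : Ω → ℂ) x := by
    have := aux_coeFn_comb T 1 Complex.I Aop Bop
    rwa [one_smul, ← hYdec] at this
  have hEθ : ∀ θ : ℚ, ∀ᵐ x ∂μ,
      ((T ((((Real.cos (θ:ℝ) : ℝ) : ℂ)) • Aop + (-((Real.sin (θ:ℝ) : ℝ) : ℂ)) • Bop) : Ω → ℂ) x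
        = (((Real.cos (θ:ℝ) : ℝ) : ℂ)) * (T Aop : Ω → ℂ) x
          + (-((Real.sin (θ:ℝ) : ℝ) : ℂ)) * (T Bop : Ω → ℂ) x) ∧
      (((T ((((Real.cos (θ:ℝ) : ℝ) : ℂ)) • Aop + (-((Real.sin (θ:ℝ) : ℝ) : ℂ)) • Bop) : Ω → ℂ) x).im = 0 ∧
      |((T ((((Real.cos (θ:ℝ) : ℝ) : ℂ)) • Aop + (-((Real.sin (θ:ℝ) : ℝ) : ℂ)) • Bop) : Ω → ℂ) x).re|
        ≤ ‖Y‖) := by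
    intro θ
    obtain ⟨c1, hc1⟩ : ∃ c : ℂ, c = ((Real.cos (θ:ℝ) : ℝ) : ℂ) := ⟨_, rfl⟩
    obtain ⟨c2, hc2⟩ : ∃ c : ℂ, c = -((Real.sin (θ:ℝ) : ℝ) : ℂ) := ⟨_, rfl⟩
    rw [← hc1, ← hc2]
    have hsaθ : IsSelfAdjoint (c1 • Aop + c2 • Bop) := by
      have hs1 : star c1 = c1 := by rw [hc1, Complex.star_def, Complex.conj_ofReal]
      have hs2 : star c2 = c2 := by
        rw [hc2, Complex.star_def, map_neg, Complex.conj_ofReal]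
      rw [IsSelfAdjoint, star_add, star_smul, star_smul, hs1, hs2, hsaA.star_eq, hsaB.star_eq]
    have hnθ : ‖c1 • Aop + c2 • Bop‖ ≤ ‖Y‖ := by
      obtain ⟨u, hu⟩ : ∃ u : ℂ, u = c1 - c2 * Complex.I := ⟨_, rfl⟩
      obtain ⟨v, hv⟩ : ∃ v : ℂ, v = c1 + c2 * Complex.I := ⟨_, rfl⟩
      have hun : ‖u‖ = 1 := by
        have hu2 : u = ((Real.cos (θ:ℝ) : ℝ) : ℂ) + ((Real.sin (θ:ℝ) : ℝ) : ℂ) * Complex.I := by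
          rw [hu, hc1, hc2]; ring
        rw [hu2, Complex.norm_def, Complex.normSq_add_mul_I,
          Real.cos_sq_add_sin_sq, Real.sqrt_one]
      have hvn : ‖v‖ = 1 := by
        have hv2 : v = ((Real.cos (θ:ℝ) : ℝ) : ℂ) + (-(Real.sin (θ:ℝ) : ℝ) : ℝ) * Complex.I := by
          rw [hv, hc1, hc2]; push_cast; ring
        rw [hv2, Complex.norm_def, Complex.normSq_add_mul_I]
        rw [show (-(Real.sin (θ:ℝ)) : ℝ) ^ 2 = Real.sin (θ:ℝ) ^ 2 by ring,
          Real.cos_sq_add_sin_sq, Real.sqrt_one]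
      have hrep : c1 • Aop + c2 • Bop
          = ((2 : ℂ)⁻¹ * u) • Y + ((2 : ℂ)⁻¹ * v) • ContinuousLinearMap.adjoint Y := by
        rw [hAop, hBop, hu, hv]
        module
      rw [hrep]
      have hn2 : ‖(2 : ℂ)⁻¹‖ = 2⁻¹ := by norm_num
      calc ‖((2 : ℂ)⁻¹ * u) • Y + ((2 : ℂ)⁻¹ * v) • ContinuousLinearMap.adjoint Y‖
          ≤ ‖((2 : ℂ)⁻¹ * u) • Y‖ + ‖((2 : ℂ)⁻¹ * v) • ContinuousLinearMap.adjoint Y‖ :=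
            norm_add_le _ _
        _ = ‖(2 : ℂ)⁻¹ * u‖ * ‖Y‖ + ‖(2 : ℂ)⁻¹ * v‖ * ‖Y‖ := by
            rw [norm_smul, norm_smul, hYdn]
        _ ≤ ‖Y‖ := by rw [norm_mul, norm_mul, hun, hvn, hn2]; nlinarith [norm_nonneg Y]
    have hsa' := aux_sa T hTpos hT1 _ hsaθ
    have hcomb := aux_coeFn_comb T c1 c2 Aop Bop
    filter_upwards [hsa', hcomb] with x h1 h2
    exact ⟨h2, h1.1, le_trans h1.2 hnθ⟩
  filter_upwards [hA, hB, hcY, (ae_all_iff).mpr hEθ] with x hxA hxB hxY hxθ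
  obtain ⟨a, ha⟩ : ∃ a : ℝ, a = ((T Aop : Ω → ℂ) x).re := ⟨_, rfl⟩
  obtain ⟨b, hb⟩ : ∃ b : ℝ, b = ((T Bop : Ω → ℂ) x).re := ⟨_, rfl⟩
  have hTA : (T Aop : Ω → ℂ) x = ((a : ℝ) : ℂ) := by
    apply Complex.ext
    · rw [ha, Complex.ofReal_re]
    · rw [hxA.1, Complex.ofReal_im]
  have hTB : (T Bop : Ω → ℂ) x = ((b : ℝ) : ℂ) := by
    apply Complex.ext
    · rw [hb, Complex.ofReal_re]
    · rw [hxB.1, Complex.ofReal_im]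
  have hq : ∀ θ : ℚ, |Real.cos (θ:ℝ) * a - Real.sin (θ:ℝ) * b| ≤ ‖Y‖ := by
    intro θ
    obtain ⟨he, _, hre⟩ := hxθ θ
    rw [he, hTA, hTB] at hre
    have : ((((Real.cos (θ:ℝ) : ℝ) : ℂ)) * ((a : ℝ) : ℂ)
        + (-((Real.sin (θ:ℝ) : ℝ) : ℂ)) * ((b : ℝ) : ℂ)).re
        = Real.cos (θ:ℝ) * a - Real.sin (θ:ℝ) * b := by
      simp only [Complex.add_re, Complex.mul_re, Complex.neg_re, Complex.neg_im,
        Complex.ofReal_re, Complex.ofReal_im]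
      ring
    rwa [this] at hre
  have hr : ∀ θ : ℝ, |Real.cos θ * a - Real.sin θ * b| ≤ ‖Y‖ := by
    have hc : Continuous fun θ : ℝ => |Real.cos θ * a - Real.sin θ * b| := by
      fun_prop
    have hclosed : IsClosed {θ : ℝ | |Real.cos θ * a - Real.sin θ * b| ≤ ‖Y‖} :=
      isClosed_le hc continuous_const
    intro θ
    have hsub : Set.range ((↑) : ℚ → ℝ) ⊆ {θ : ℝ | |Real.cos θ * a - Real.sin θ * b| ≤ ‖Y‖} := by
      rintro _ ⟨q, rfl⟩
      exact hq q
    exact hclosed.closure_subset_iff.mpr hsub (Rat.denseRange_cast θ)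
  have hz : (T Y : Ω → ℂ) x = ((a : ℝ) : ℂ) + ((b : ℝ) : ℂ) * Complex.I := by
    rw [hxY, hTA, hTB]
    ring
  rw [hz]
  by_cases hz0 : ((a : ℝ) : ℂ) + ((b : ℝ) : ℂ) * Complex.I = 0
  · rw [hz0, norm_zero]
    exact norm_nonneg Y
  · set w : ℂ := ((a : ℝ) : ℂ) + ((b : ℝ) : ℂ) * Complex.I with hw
    have hwre : w.re = a := by simp [hw]
    have hwim : w.im = b := by simp [hw]
    have hcos := Complex.cos_arg hz0
    have hsin := Complex.sin_arg w
    have habs0 : (0 : ℝ) < ‖w‖ := norm_pos_iff.mpr hz0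
    have hkey := hr (-(w.arg))
    rw [Real.cos_neg, Real.sin_neg] at hkey
    have hval : Real.cos w.arg * a - -Real.sin w.arg * b = ‖w‖ := by
      rw [hcos, hsin, hwre, hwim]
      have hsq : ‖w‖ * ‖w‖ = a * a + b * b := by
        rw [← sq, ← Complex.normSq_eq_norm_sq, Complex.normSq_apply, hwre, hwim]
      field_simp
      linarith [hsq]
    rw [hval] at hkey
    calc ‖w‖ ≤ |‖w‖| := le_abs_self _
      _ ≤ ‖Y‖ := hkey

end Main




/-- Given a positive unital linear map `T : B(H) → L^∞(Ω, μ; ℂ)` and a norm-closed,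
norm-separable, adjoint-closed subspace `D ⊆ B(H)` with countable dense subset `C`,
there are a `μ`-null set `N`, measurable representatives `f_A` of the classes `T(A)`
for `A ∈ C`, and states `ω_λ` on `B(H)` for `λ ∉ N`, with `f_A(λ) = ω_λ(A)` for all
`A ∈ C` and `λ ∉ N`. -/
theorem stmt7 {H : Type*} [NormedAddCommGroup H] [InnerProductSpace ℂ H] [CompleteSpace H]
    [TopologicalSpace.SeparableSpace H]
    {Ω : Type*} [MeasurableSpace Ω] [StandardBorelSpace Ω] (μ : Measure Ω)
    (T : (H →L[ℂ] H) →ₗ[ℂ] Lp ℂ ⊤ μ)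
    (hTpos : ∀ A : H →L[ℂ] H, A.IsPositive → ∀ᵐ x ∂μ, 0 ≤ (T A : Ω → ℂ) x)
    (hT1 : (T 1 : Ω → ℂ) =ᵐ[μ] fun _ => 1)
    (D : Submodule ℂ (H →L[ℂ] H))
    (hDclosed : IsClosed (D : Set (H →L[ℂ] H)))
    (hDsep : TopologicalSpace.IsSeparable (D : Set (H →L[ℂ] H)))
    (hDadj : ∀ A ∈ D, ContinuousLinearMap.adjoint A ∈ D)
    (C : Set (H →L[ℂ] H)) (hCcount : C.Countable) (hCD : C ⊆ D)
    (hCdense : (D : Set (H →L[ℂ] H)) ⊆ closure C) :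
    ∃ N : Set Ω, MeasurableSet N ∧ μ N = 0 ∧
      ∃ f : (H →L[ℂ] H) → Ω → ℂ,
        (∀ A ∈ C, Measurable (f A) ∧ f A =ᵐ[μ] (T A : Ω → ℂ)) ∧
        ∃ ω : Ω → ((H →L[ℂ] H) →ₗ[ℂ] ℂ),
          (∀ x, x ∉ N →
            (∀ A : H →L[ℂ] H, A.IsPositive → 0 ≤ ω x A) ∧ ω x 1 = 1) ∧
          ∀ A ∈ C, ∀ x, x ∉ N → f A x = ω x A := by
  classical
  -- measurable representatives
  let g : (H →L[ℂ] H) → Ω → ℂ := fun A => (Lp.aestronglyMeasurable (T A)).mk (T A : Ω → ℂ)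
  have hgmeas : ∀ A, Measurable (g A) := fun A =>
    (Lp.aestronglyMeasurable (T A)).stronglyMeasurable_mk.measurable
  have hgae : ∀ A, (T A : Ω → ℂ) =ᵐ[μ] g A := fun A => (Lp.aestronglyMeasurable (T A)).ae_eq_mk
  -- countable generating set
  let G : Set (H →L[ℂ] H) := insert 1 C
  have hGc : G.Countable := hCcount.insert 1
  haveI : Countable ↥G := hGc.to_subtype
  let qc : ℚ × ℚ → ℂ := fun q => (q.1 : ℂ) + (q.2 : ℂ) * Complex.I
  -- the countable family of events
  have hEvent : ∀ i : Σ s : Finset ↥G, ({a // a ∈ s} → ℚ × ℚ), ∀ᵐ x ∂μ,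
      ‖∑ a ∈ i.1.attach, qc (i.2 a) * g (↑↑a) x‖
        ≤ ‖∑ a ∈ i.1.attach, qc (i.2 a) • ((↑↑a : H →L[ℂ] H))‖ := by
    rintro ⟨s, q⟩
    have h1 := aux_coeFn_sum T s.attach (fun a => qc (q a)) (fun a => (↑↑a : H →L[ℂ] H))
    have h2 := aux_bound T hTpos hT1 (∑ a ∈ s.attach, qc (q a) • ((↑↑a : H →L[ℂ] H)))
    have h3 : ∀ᵐ x ∂μ, ∀ a : {a // a ∈ s}, (T (↑↑a : H →L[ℂ] H) : Ω → ℂ) x = g (↑↑a) x :=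
      ae_all_iff.mpr fun a => (hgae (↑↑a : H →L[ℂ] H)).mono fun x hx => hx
    filter_upwards [h1, h2, h3] with x hx1 hx2 hx3
    calc ‖∑ a ∈ s.attach, qc (q a) * g (↑↑a) x‖
        = ‖∑ a ∈ s.attach, qc (q a) * (T (↑↑a : H →L[ℂ] H) : Ω → ℂ) x‖ := by
          congr 1
          exact Finset.sum_congr rfl fun a _ => by rw [hx3 a]
      _ = ‖(T (∑ a ∈ s.attach, qc (q a) • ((↑↑a : H →L[ℂ] H))) : Ω → ℂ) x‖ := by rw [← hx1]
      _ ≤ _ := hx2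
  have hE1 : ∀ᵐ x ∂μ, g 1 x = 1 := by
    filter_upwards [hgae 1, hT1] with x h1 h2
    rw [← h1, h2]
  -- the null set
  have hN : ∀ᵐ x ∂μ, g 1 x = 1 ∧ ∀ i : Σ s : Finset ↥G, ({a // a ∈ s} → ℚ × ℚ),
      ‖∑ a ∈ i.1.attach, qc (i.2 a) * g (↑↑a) x‖
        ≤ ‖∑ a ∈ i.1.attach, qc (i.2 a) • ((↑↑a : H →L[ℂ] H))‖ :=
    hE1.and (ae_all_iff.mpr hEvent)
  set P : Ω → Prop := fun x => g 1 x = 1 ∧ ∀ i : Σ s : Finset ↥G, ({a // a ∈ s} → ℚ × ℚ),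
      ‖∑ a ∈ i.1.attach, qc (i.2 a) * g (↑↑a) x‖
        ≤ ‖∑ a ∈ i.1.attach, qc (i.2 a) • ((↑↑a : H →L[ℂ] H))‖ with hP
  let N : Set Ω := toMeasurable μ {x | ¬ P x}
  have hNmeas : MeasurableSet N := measurableSet_toMeasurable μ _
  have hNnull : μ N = 0 := by
    rw [measure_toMeasurable]
    exact ae_iff.mp hN
  have hxgood : ∀ x, x ∉ N → P x := by
    intro x hx
    by_contra h
    exact hx (subset_toMeasurable μ _ h)
  -- per-point states
  have hstate : ∀ x, x ∉ N → ∃ ψ : (H →L[ℂ] H) →L[ℂ] ℂ,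
      (∀ A : H →L[ℂ] H, A.IsPositive → 0 ≤ ψ A) ∧ ψ 1 = 1 ∧ ∀ A ∈ C, ψ A = g A x := by
    intro x hx
    obtain ⟨hx1, hxI⟩ := hxgood x hx
    -- pointwise inequality for complex coefficients, by density
    have key0 : ∀ (s : Finset ↥G) (c : {a // a ∈ s} → ℂ),
        ‖∑ a ∈ s.attach, c a * g (↑↑a) x‖ ≤ ‖∑ a ∈ s.attach, c a • ((↑↑a : H →L[ℂ] H))‖ := by
      intro s
      have hcont1 : Continuous fun c : {a // a ∈ s} → ℂ =>
          ‖∑ a ∈ s.attach, c a * g (↑↑a) x‖ :=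
        (continuous_finset_sum _ fun a _ => (continuous_apply a).mul continuous_const).norm
      have hcont2 : Continuous fun c : {a // a ∈ s} → ℂ =>
          ‖∑ a ∈ s.attach, c a • ((↑↑a : H →L[ℂ] H))‖ :=
        (continuous_finset_sum _ fun a _ => (continuous_apply a).smul continuous_const).norm
      have hclosed : IsClosed {c : {a // a ∈ s} → ℂ |
          ‖∑ a ∈ s.attach, c a * g (↑↑a) x‖ ≤ ‖∑ a ∈ s.attach, c a • ((↑↑a : H →L[ℂ] H))‖} :=
        isClosed_le hcont1 hcont2
      have hdense : Dense {c : {a // a ∈ s} → ℂ | ∀ a, c a ∈ Set.range qc} := by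
        have := dense_pi (α := fun _ : {a // a ∈ s} => ℂ)
          (s := fun _ => Set.range qc) Set.univ (fun _ _ => aux_dense_qc)
        have heq : {c : {a // a ∈ s} → ℂ | ∀ a, c a ∈ Set.range qc}
            = Set.pi Set.univ (fun _ => Set.range qc) := by
          ext c; simp [Set.mem_pi]
        rw [heq]
        exact this
      have hsubset : {c : {a // a ∈ s} → ℂ | ∀ a, c a ∈ Set.range qc} ⊆ {c : {a // a ∈ s} → ℂ |
          ‖∑ a ∈ s.attach, c a * g (↑↑a) x‖ ≤ ‖∑ a ∈ s.attach, c a • ((↑↑a : H →L[ℂ] H))‖} := by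
        intro c hc
        choose q hq using hc
        have hceq : c = fun a => qc (q a) := funext fun a => (hq a).symm
        have := hxI ⟨s, q⟩
        simpa [hceq] using this
      intro c
      exact (hclosed.closure_subset_iff.mpr hsubset) (hdense c)
    -- build the linear functional
    let φ : ↥G → ℂ := fun a => g ↑a x
    let Mv : (↥G →₀ ℂ) →ₗ[ℂ] (H →L[ℂ] H) :=
      Finsupp.linearCombination ℂ (fun a : ↥G => (↑a : H →L[ℂ] H))
    let Lv : (↥G →₀ ℂ) →ₗ[ℂ] ℂ := Finsupp.linearCombination ℂ φ
    have key : ∀ cc : ↥G →₀ ℂ, ‖Lv cc‖ ≤ ‖Mv cc‖ := by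
      intro cc
      have h1 : Lv cc = ∑ a ∈ cc.support, cc a * φ a := by
        rw [Finsupp.linearCombination_apply, Finsupp.sum]
        simp [smul_eq_mul]
      have h2 : Mv cc = ∑ a ∈ cc.support, cc a • ((↑a : H →L[ℂ] H)) := by
        rw [Finsupp.linearCombination_apply, Finsupp.sum]
      rw [h1, h2]
      have h3 := key0 cc.support (fun a => cc ↑a)
      rwa [Finset.sum_attach cc.support (fun a => cc a * g (↑a) x),
        Finset.sum_attach cc.support (fun a => cc a • ((↑a : G) : H →L[ℂ] H))] at h3
    have hker : LinearMap.ker Mv ≤ LinearMap.ker Lv := by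
      intro cc hcc
      rw [LinearMap.mem_ker] at hcc ⊢
      have h4 := key cc
      rw [hcc, norm_zero] at h4
      exact norm_le_zero_iff.mp h4
    let L1 : ((↥G →₀ ℂ) ⧸ LinearMap.ker Mv) →ₗ[ℂ] ℂ := Submodule.liftQ _ Lv hker
    let e := LinearMap.quotKerEquivRange Mv
    let L : ↥(LinearMap.range Mv) →ₗ[ℂ] ℂ := L1.comp (e.symm : _ →ₗ[ℂ] _)
    have hLval : ∀ (cc : ↥G →₀ ℂ) (w : ↥(LinearMap.range Mv)), Mv cc = ↑w → L w = Lv cc := by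
      intro cc w hw
      have he : e (Submodule.Quotient.mk cc) = w := by
        apply Subtype.ext
        rw [LinearMap.quotKerEquivRange_apply_mk]
        exact hw
      have he2 : e.symm w = Submodule.Quotient.mk cc := by rw [← he, LinearEquiv.symm_apply_apply]
      show L1 (e.symm w) = Lv cc
      rw [he2]
      exact Submodule.liftQ_apply _ Lv cc
    have hLbound : ∀ w : ↥(LinearMap.range Mv), ‖L w‖ ≤ 1 * ‖w‖ := by
      intro w
      obtain ⟨cc, hcc⟩ := w.2
      rw [hLval cc w hcc, one_mul]
      calc ‖Lv cc‖ ≤ ‖Mv cc‖ := key cc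
        _ = ‖w‖ := by rw [hcc]; rfl
    let Lc : ↥(LinearMap.range Mv) →L[ℂ] ℂ := LinearMap.mkContinuous L 1 hLbound
    obtain ⟨ψ, hψext, hψnorm⟩ := exists_extension_norm_eq (LinearMap.range Mv) Lc
    have hψ1 : ‖ψ‖ ≤ 1 := by
      rw [hψnorm]
      exact LinearMap.mkContinuous_norm_le L zero_le_one hLbound
    have hval : ∀ a : ↥G, ψ ↑a = φ a := by
      intro a
      have hm : Mv (Finsupp.single a 1) = (↑a : H →L[ℂ] H) := by
        simp [Mv, Finsupp.linearCombination_single]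
      have hmem : (↑a : H →L[ℂ] H) ∈ LinearMap.range Mv := ⟨Finsupp.single a 1, hm⟩
      have h5 := hψext ⟨(↑a : H →L[ℂ] H), hmem⟩
      rw [h5, show Lc ⟨(↑a : H →L[ℂ] H), hmem⟩ = L ⟨(↑a : H →L[ℂ] H), hmem⟩ from rfl,
        hLval (Finsupp.single a 1) _ hm]
      simp [Lv, Finsupp.linearCombination_single]
    have hψone : ψ 1 = 1 := by
      have h6 := hval ⟨1, Set.mem_insert 1 C⟩
      simpa [φ, hx1] using h6
    refine ⟨ψ, fun A hA => aux_state ψ hψ1 hψone hA, hψone, fun A hAC => ?_⟩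
    have h7 := hval ⟨A, Set.mem_insert_of_mem 1 hAC⟩
    simpa [φ] using h7
  -- assemble
  refine ⟨N, hNmeas, hNnull, g, fun A _ => ⟨hgmeas A, (hgae A).symm⟩, ?_⟩
  let ω : Ω → ((H →L[ℂ] H) →ₗ[ℂ] ℂ) := fun x =>
    if hx : x ∉ N then ((hstate x hx).choose : (H →L[ℂ] H) →L[ℂ] ℂ).toLinearMap else 0
  refine ⟨ω, ?_, ?_⟩
  · intro x hx
    obtain ⟨hpos, h1, _⟩ := (hstate x hx).choose_spec
    constructor
    · intro A hA
      simp only [ω, dif_pos hx]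
      exact hpos A hA
    · simp only [ω, dif_pos hx]
      exact h1
  · intro A hAC x hx
    obtain ⟨_, _, hv⟩ := (hstate x hx).choose_spec
    simp only [ω, dif_pos hx]
    exact (hv A hAC).symm
end

section
/- Let H be a complex Hilbert space, (Ω, 𝒜) a standard Borel space, μ a measure on (Ω, 𝒜), and let E(H) = {E ∈ B(H) : 0 ≤ E ≤ 1} be the set of effects. Let T : E(H) → L^∞(Ω, μ; ℝ) be a map satisfying: (1) T(1) = 1 (the constant-one class); (2) T(E + F) = T(E) + T(F) whenever E, F ∈ E(H) and E + F ≤ 1; (3) T(t·E) = t·T(E) for all real t with 0 ≤ t ≤ 1 and all E ∈ E(H); (4) 0 ≤ T(E) ≤ 1 μ-a.e. for all E ∈ E(H). Then there exists a ℂ-linear map T̃ : B(H) → L^∞(Ω, μ; ℂ) that is positive (it maps every positive operator to the class of a μ-a.e. nonnegative real-valued function), satisfies T̃(1) = 1, and extends T, i.e., T̃(E) = T(E) for every effect E ∈ E(H). -/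
set_option linter.unusedSectionVars false
set_option linter.unusedTactic false


open MeasureTheory
open scoped ComplexInnerProductSpace ComplexOrder

open ComplexStarModule

/-- An effect on a complex Hilbert space: an operator `E` with `0 ≤ E ≤ 1`. -/
def IsEffect {H : Type*} [NormedAddCommGroup H] [InnerProductSpace ℂ H] [CompleteSpace H]
    (E : H →L[ℂ] H) : Prop :=
  E.IsPositive ∧ (1 - E).IsPositive

section aux
variable {H : Type*} [NormedAddCommGroup H] [InnerProductSpace ℂ H] [CompleteSpace H]

lemma aux_smul_pos (r : ℝ) (hr : 0 ≤ r) (A : H →L[ℂ] H) (hA : A.IsPositive) :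
    ((r:ℂ) • A).IsPositive := by
  constructor
  · refine ContinuousLinearMap.isSelfAdjoint_iff_isSymmetric.mp ?_
    rw [IsSelfAdjoint, star_smul, Complex.star_def, Complex.conj_ofReal, hA.isSelfAdjoint]
  · intro x
    have h := hA.2 x
    simp only [ContinuousLinearMap.reApplyInnerSelf, ContinuousLinearMap.smul_apply,
      inner_smul_left, Complex.conj_ofReal] at *
    rw [show ((r:ℂ)) = RCLike.ofReal r from rfl, RCLike.re_ofReal_mul]
    exact mul_nonneg hr h

lemma aux_re_le (A : H →L[ℂ] H) (x : H) : RCLike.re ⟪A x, x⟫ ≤ ‖A‖ * ‖x‖ ^ 2 := by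
  calc RCLike.re ⟪A x, x⟫ ≤ ‖(⟪A x, x⟫ : ℂ)‖ := RCLike.re_le_norm _
    _ ≤ ‖A x‖ * ‖x‖ := norm_inner_le_norm _ _
    _ ≤ (‖A‖ * ‖x‖) * ‖x‖ := by gcongr; exact A.le_opNorm x
    _ = ‖A‖ * ‖x‖ ^ 2 := by ring

lemma aux_le_re (A : H →L[ℂ] H) (x : H) : -(‖A‖ * ‖x‖ ^ 2) ≤ RCLike.re ⟪A x, x⟫ := by
  have h : |RCLike.re (⟪A x, x⟫ : ℂ)| ≤ ‖A‖ * ‖x‖ ^ 2 := by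
    calc |RCLike.re (⟪A x, x⟫ : ℂ)| ≤ ‖(⟪A x, x⟫ : ℂ)‖ := RCLike.abs_re_le_norm _
      _ ≤ ‖A x‖ * ‖x‖ := norm_inner_le_norm _ _
      _ ≤ (‖A‖ * ‖x‖) * ‖x‖ := by gcongr; exact A.le_opNorm x
      _ = ‖A‖ * ‖x‖ ^ 2 := by ring
  linarith [abs_le.mp h]

lemma aux_eff_scale (A : H →L[ℂ] H) (hA : A.IsPositive) (c : ℝ) (hc : 0 < c)
    (hAc : ‖A‖ ≤ c) : IsEffect (((c : ℝ) : ℂ)⁻¹ • A) := by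
  have h1 : (((c:ℝ):ℂ)⁻¹ • A).IsPositive := by
    have := aux_smul_pos c⁻¹ (by positivity) A hA
    rwa [Complex.ofReal_inv] at this
  refine ⟨h1, ?_, ?_⟩
  · exact ContinuousLinearMap.isSelfAdjoint_iff_isSymmetric.mp
      ((IsSelfAdjoint.one (R := H →L[ℂ] H)).sub h1.isSelfAdjoint)
  · intro x
    have key := aux_re_le A x
    have hxx : RCLike.re (⟪x, x⟫ : ℂ) = ‖x‖ ^ 2 := inner_self_eq_norm_sq x
    simp only [ContinuousLinearMap.reApplyInnerSelf, ContinuousLinearMap.sub_apply,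
      ContinuousLinearMap.one_apply, ContinuousLinearMap.smul_apply, inner_sub_left,
      inner_smul_left, map_sub, ← Complex.ofReal_inv, Complex.conj_ofReal]
    rw [show (((c⁻¹:ℝ)):ℂ) = RCLike.ofReal (c⁻¹:ℝ) from rfl, RCLike.re_ofReal_mul, hxx]
    have h2 : c⁻¹ * RCLike.re (⟪A x, x⟫ : ℂ) ≤ c⁻¹ * (c * ‖x‖ ^ 2) := by
      apply mul_le_mul_of_nonneg_left _ (by positivity)
      calc RCLike.re (⟪A x, x⟫ : ℂ) ≤ ‖A‖ * ‖x‖ ^ 2 := key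
        _ ≤ c * ‖x‖ ^ 2 := by nlinarith [sq_nonneg ‖x‖]
    have h3 : c⁻¹ * (c * ‖x‖ ^ 2) = ‖x‖ ^ 2 := by field_simp
    linarith

lemma aux_shift_pos (B : H →L[ℂ] H) (hB : IsSelfAdjoint B) (c : ℝ) (hBc : ‖B‖ ≤ c) :
    (B + ((c:ℝ):ℂ) • 1).IsPositive := by
  have hc0 : 0 ≤ c := le_trans (norm_nonneg _) hBc
  constructor
  · refine ContinuousLinearMap.isSelfAdjoint_iff_isSymmetric.mp ?_
    exact hB.add (by
      rw [IsSelfAdjoint, star_smul, Complex.star_def, Complex.conj_ofReal, star_one])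
  · intro x
    have key := aux_le_re B x
    have hxx : RCLike.re (⟪x, x⟫ : ℂ) = ‖x‖ ^ 2 := inner_self_eq_norm_sq x
    simp only [ContinuousLinearMap.reApplyInnerSelf, ContinuousLinearMap.add_apply,
      ContinuousLinearMap.smul_apply, ContinuousLinearMap.one_apply, inner_add_left,
      inner_smul_left, Complex.conj_ofReal, map_add]
    rw [show ((c:ℂ)) = RCLike.ofReal c from rfl, RCLike.re_ofReal_mul, hxx]
    nlinarith [sq_nonneg ‖x‖]

lemma aux_one_effect : IsEffect (1 : H →L[ℂ] H) :=
  ⟨ContinuousLinearMap.isPositive_one, by rw [sub_self]; exact ContinuousLinearMap.isPositive_zero⟩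

end aux

set_option maxHeartbeats 1000000 in
/-- A map `T` from the effects of `B(H)` to `L^∞(Ω, μ; ℝ)` which is normalized, additive
on effects summing to at most `1`, homogeneous for scalars in `[0,1]`, and takes values
in `[0,1]` a.e., extends to a positive unital `ℂ`-linear map `T̃ : B(H) → L^∞(Ω, μ; ℂ)`. -/
theorem stmt8 {H : Type*} [NormedAddCommGroup H] [InnerProductSpace ℂ H] [CompleteSpace H]
    {Ω : Type*} [MeasurableSpace Ω] [StandardBorelSpace Ω] (μ : Measure Ω)
    (T : (H →L[ℂ] H) → Lp ℝ ⊤ μ)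
    (hT1 : (T 1 : Ω → ℝ) =ᵐ[μ] fun _ => 1)
    (hTadd : ∀ E F : H →L[ℂ] H, IsEffect E → IsEffect F → (1 - (E + F)).IsPositive →
      T (E + F) = T E + T F)
    (hTsmul : ∀ t : ℝ, 0 ≤ t → t ≤ 1 → ∀ E : H →L[ℂ] H, IsEffect E →
      T ((t : ℂ) • E) = t • T E)
    (hTbound : ∀ E : H →L[ℂ] H, IsEffect E →
      (∀ᵐ x ∂μ, 0 ≤ (T E : Ω → ℝ) x) ∧ (∀ᵐ x ∂μ, (T E : Ω → ℝ) x ≤ 1)) :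
    ∃ Ttilde : (H →L[ℂ] H) →ₗ[ℂ] Lp ℂ ⊤ μ,
      (∀ A : H →L[ℂ] H, A.IsPositive → ∀ᵐ x ∂μ, 0 ≤ (Ttilde A : Ω → ℂ) x) ∧
      ((Ttilde 1 : Ω → ℂ) =ᵐ[μ] fun _ => 1) ∧
      ∀ E : H →L[ℂ] H, IsEffect E →
        (Ttilde E : Ω → ℂ) =ᵐ[μ] fun x => ((T E : Ω → ℝ) x : ℂ) := by
  classical
  -- T at 0
  have hT0 : T 0 = 0 := by
    have h := hTsmul 0 le_rfl zero_le_one 1 aux_one_effect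
    simpa using h
  -- the rescaled extension to positive operators
  set S : (H →L[ℂ] H) → Lp ℝ ⊤ μ :=
    fun A => (‖A‖ + 1) • T (((‖A‖ + 1 : ℝ) : ℂ)⁻¹ • A) with hSdef
  -- scaling comparison
  have key0 : ∀ A : H →L[ℂ] H, A.IsPositive → ∀ c d : ℝ, 0 < c → c ≤ d → ‖A‖ ≤ c →
      d • T (((d:ℝ):ℂ)⁻¹ • A) = c • T (((c:ℝ):ℂ)⁻¹ • A) := by
    intro A hA c d hc hcd hAc
    have hd : 0 < d := lt_of_lt_of_le hc hcd
    have hE := aux_eff_scale A hA c hc hAc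
    have h2 := hTsmul (c / d) (by positivity) ((div_le_one hd).2 hcd) _ hE
    have h3 : ((c / d : ℝ) : ℂ) • (((c:ℝ):ℂ)⁻¹ • A) = ((d:ℝ):ℂ)⁻¹ • A := by
      rw [smul_smul]
      congr 1
      have hc' : (c : ℂ) ≠ 0 := by exact_mod_cast hc.ne'
      have hd' : (d : ℂ) ≠ 0 := by exact_mod_cast hd.ne'
      push_cast
      field_simp
    rw [h3] at h2
    rw [h2, smul_smul]
    congr 1
    field_simp
  have hSc : ∀ A : H →L[ℂ] H, A.IsPositive → ∀ c : ℝ, 0 < c → ‖A‖ ≤ c →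
      S A = c • T (((c:ℝ):ℂ)⁻¹ • A) := by
    intro A hA c hc hAc
    have h0 : (0:ℝ) < ‖A‖ + 1 := by positivity
    rcases le_total c (‖A‖ + 1) with h | h
    · exact key0 A hA c (‖A‖ + 1) hc h hAc
    · exact (key0 A hA (‖A‖ + 1) c h0 h (by linarith)).symm
  -- S agrees with T on effects
  have hSeff : ∀ E : H →L[ℂ] H, IsEffect E → S E = T E := by
    intro E hE
    have h0 : (0:ℝ) < ‖E‖ + 1 := by positivity
    have h1 : (‖E‖ + 1 : ℝ)⁻¹ ≤ 1 := by
      rw [inv_le_one_iff₀]; right; linarith [norm_nonneg E]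
    have h2 := hTsmul (‖E‖ + 1)⁻¹ (by positivity) h1 E hE
    rw [hSdef]
    simp only
    rw [← Complex.ofReal_inv] at *
    rw [h2, smul_smul, mul_inv_cancel₀ h0.ne', one_smul]
  -- S is additive on positive operators
  have hSadd : ∀ A B : H →L[ℂ] H, A.IsPositive → B.IsPositive → S (A + B) = S A + S B := by
    intro A B hA hB
    set c : ℝ := ‖A‖ + ‖B‖ + 1 with hc
    have hc0 : (0:ℝ) < c := by positivity
    have hAc : ‖A‖ ≤ c := by have := norm_nonneg B; simp [hc]; linarith
    have hBc : ‖B‖ ≤ c := by have := norm_nonneg A; simp [hc]; linarith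
    have hABc : ‖A + B‖ ≤ c := le_trans (norm_add_le A B) (by simp [hc])
    rw [hSc (A + B) (hA.add hB) c hc0 hABc, hSc A hA c hc0 hAc, hSc B hB c hc0 hBc]
    have hsum : ((c:ℝ):ℂ)⁻¹ • (A + B) = ((c:ℝ):ℂ)⁻¹ • A + ((c:ℝ):ℂ)⁻¹ • B := smul_add _ _ _
    rw [hsum, hTadd _ _ (aux_eff_scale A hA c hc0 hAc) (aux_eff_scale B hB c hc0 hBc)
      (by rw [← hsum]; exact (aux_eff_scale (A + B) (hA.add hB) c hc0 hABc).2), smul_add]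
  -- S is ℝ≥0-homogeneous on positive operators
  have hSsmul : ∀ A : H →L[ℂ] H, A.IsPositive → ∀ r : ℝ, 0 ≤ r →
      S ((r:ℂ) • A) = r • S A := by
    intro A hA r hr
    rcases eq_or_lt_of_le hr with h | h
    · rw [← h]
      norm_num [hSdef, hT0]
    · set c : ℝ := r * (‖A‖ + 1) with hc
      have hc0 : (0:ℝ) < c := by positivity
      have hnorm : ‖(r:ℂ) • A‖ ≤ c := by
        rw [norm_smul, Complex.norm_real, Real.norm_eq_abs, abs_of_pos h]
        have : r * ‖A‖ ≤ r * (‖A‖ + 1) := by nlinarith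
        simpa [hc] using this
      rw [hSc ((r:ℂ) • A) (aux_smul_pos r hr A hA) c hc0 hnorm]
      have h3 : ((c:ℝ):ℂ)⁻¹ • ((r:ℂ) • A) = ((‖A‖ + 1 : ℝ):ℂ)⁻¹ • A := by
        rw [smul_smul]
        congr 1
        have hr' : (r : ℂ) ≠ 0 := by exact_mod_cast h.ne'
        have hA' : ((‖A‖ + 1 : ℝ) : ℂ) ≠ 0 := by
          exact_mod_cast (by positivity : (0:ℝ) < ‖A‖ + 1).ne'
        rw [hc]
        push_cast
        field_simp
      rw [h3, hSdef]
      simp only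
      rw [smul_smul, hc]
  -- the extension to selfadjoint operators
  set S1 : (H →L[ℂ] H) → Lp ℝ ⊤ μ :=
    fun B => S (B + ((‖B‖ + 1 : ℝ) : ℂ) • 1) - (‖B‖ + 1) • S 1 with hS1def
  have hpos1 : (1 : H →L[ℂ] H).IsPositive := ContinuousLinearMap.isPositive_one
  have hS1c : ∀ B : H →L[ℂ] H, IsSelfAdjoint B → ∀ c : ℝ, ‖B‖ ≤ c →
      S1 B = S (B + ((c : ℝ) : ℂ) • 1) - c • S 1 := by
    intro B hB c hc
    have hc0 : (0:ℝ) ≤ c := le_trans (norm_nonneg _) hc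
    have hcB : ‖B‖ ≤ ‖B‖ + 1 := by linarith [norm_nonneg B]
    have hcB0 : (0:ℝ) ≤ ‖B‖ + 1 := by positivity
    have p1 : (B + ((c:ℝ):ℂ) • 1).IsPositive := aux_shift_pos B hB c hc
    have p2 : (B + ((‖B‖ + 1 : ℝ):ℂ) • 1).IsPositive := aux_shift_pos B hB _ hcB
    have p3 : (((c:ℝ):ℂ) • 1 : H →L[ℂ] H).IsPositive := aux_smul_pos c hc0 1 hpos1
    have p4 : (((‖B‖ + 1 : ℝ):ℂ) • 1 : H →L[ℂ] H).IsPositive := aux_smul_pos _ hcB0 1 hpos1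
    have h4 := hSadd _ _ p1 p4
    have h5 := hSadd _ _ p2 p3
    have e1 : (B + ((c:ℝ):ℂ) • 1) + ((‖B‖ + 1 : ℝ):ℂ) • 1
        = (B + ((‖B‖ + 1 : ℝ):ℂ) • 1) + ((c:ℝ):ℂ) • 1 := add_right_comm _ _ _
    rw [e1, h5] at h4
    rw [hSsmul 1 hpos1 c hc0, hSsmul 1 hpos1 _ hcB0] at h4
    -- h4 : S (B + (‖B‖+1)•1) + c • S 1 = S (B + c•1) + (‖B‖+1) • S 1
    have h8 : S1 B = S (B + ((‖B‖ + 1 : ℝ):ℂ) • 1) - (‖B‖ + 1) • S 1 := rfl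
    rw [h8, sub_eq_sub_iff_add_eq_add]
    exact h4
  have hS1zero : S1 (0 : H →L[ℂ] H) = 0 := by
    have h : S1 (0 : H →L[ℂ] H)
        = S ((0 : H →L[ℂ] H) + ((‖(0 : H →L[ℂ] H)‖ + 1 : ℝ):ℂ) • 1)
          - (‖(0 : H →L[ℂ] H)‖ + 1) • S 1 := rfl
    rw [h]
    norm_num
  have hS1add : ∀ B C : H →L[ℂ] H, IsSelfAdjoint B → IsSelfAdjoint C →
      S1 (B + C) = S1 B + S1 C := by
    intro B C hB hC
    have hBC : ‖B + C‖ ≤ (‖B‖ + 1) + (‖C‖ + 1) := le_trans (norm_add_le _ _) (by linarith)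
    rw [hS1c (B + C) (hB.add hC) _ hBC,
      hS1c B hB (‖B‖ + 1) (by linarith [norm_nonneg B]),
      hS1c C hC (‖C‖ + 1) (by linarith [norm_nonneg C])]
    have e2 : (B + C) + ((((‖B‖ + 1) + (‖C‖ + 1) : ℝ)):ℂ) • 1
        = (B + ((‖B‖ + 1 : ℝ):ℂ) • 1) + (C + ((‖C‖ + 1 : ℝ):ℂ) • 1) := by
      rw [Complex.ofReal_add, add_smul]
      abel
    rw [e2, hSadd _ _ (aux_shift_pos B hB _ (by linarith [norm_nonneg B]))
      (aux_shift_pos C hC _ (by linarith [norm_nonneg C])), add_smul]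
    abel
  have hS1neg : ∀ B : H →L[ℂ] H, IsSelfAdjoint B → S1 (-B) = -S1 B := by
    intro B hB
    have h := hS1add B (-B) hB hB.neg
    rw [add_neg_cancel, hS1zero] at h
    exact eq_neg_of_add_eq_zero_right h.symm
  have hS1smulC : ∀ B : H →L[ℂ] H, IsSelfAdjoint B → ∀ r : ℝ, 0 ≤ r →
      S1 ((r:ℂ) • B) = r • S1 B := by
    intro B hB r hr
    rcases eq_or_lt_of_le hr with h | h
    · rw [← h, Complex.ofReal_zero, zero_smul, hS1zero, zero_smul]
    · have hsB : IsSelfAdjoint ((r:ℂ) • B) := by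
        rw [IsSelfAdjoint, star_smul, Complex.star_def, Complex.conj_ofReal, hB]
      have hc0 : ‖(r:ℂ) • B‖ ≤ r * (‖B‖ + 1) := by
        rw [norm_smul, Complex.norm_real, Real.norm_eq_abs, abs_of_pos h]
        nlinarith [norm_nonneg B]
      rw [hS1c _ hsB (r * (‖B‖ + 1)) hc0]
      have e4 : (r:ℂ) • B + (((r * (‖B‖ + 1)) : ℝ):ℂ) • 1
          = (r:ℂ) • (B + ((‖B‖ + 1 : ℝ):ℂ) • 1) := by
        rw [smul_add, smul_smul]
        congr 2
        push_cast
        ring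
      rw [e4, hSsmul _ (aux_shift_pos B hB (‖B‖ + 1) (by linarith [norm_nonneg B])) r hr]
      have h9 : S1 B = S (B + ((‖B‖ + 1 : ℝ):ℂ) • 1) - (‖B‖ + 1) • S 1 := rfl
      rw [h9, smul_sub, smul_smul, mul_smul r (‖B‖ + 1) (S 1)]
  have hS1smulR : ∀ B : H →L[ℂ] H, IsSelfAdjoint B → ∀ r : ℝ, S1 (r • B) = r • S1 B := by
    intro B hB r
    rcases le_total 0 r with hr | hr
    · rw [← Complex.coe_smul]
      exact hS1smulC B hB r hr
    · have h2 : S1 ((-r) • B) = (-r) • S1 B := by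
        rw [← Complex.coe_smul]
        exact hS1smulC B hB (-r) (by linarith)
      have h1 : r • B = -((-r) • B) := by rw [neg_smul, neg_neg]
      rw [h1, hS1neg _ ((IsSelfAdjoint.all (-r)).smul hB), h2, neg_smul, neg_neg]
  have hS1eq : ∀ A : H →L[ℂ] H, A.IsPositive → S1 A = S A := by
    intro A hA
    have h : S1 A = S (A + ((‖A‖ + 1 : ℝ):ℂ) • 1) - (‖A‖ + 1) • S 1 := rfl
    rw [h, hSadd A _ hA (aux_smul_pos (‖A‖ + 1) (by positivity) 1 hpos1),
      hSsmul 1 hpos1 (‖A‖ + 1) (by positivity)]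
    abel
  -- the coercion ℝ → ℂ on Lp spaces
  set g : Lp ℝ ⊤ μ →ₗ[ℝ] Lp ℂ ⊤ μ := Complex.ofRealCLM.compLpₗ ⊤ μ with hgdef
  have hg : ∀ f : Lp ℝ ⊤ μ, (g f : Ω → ℂ) =ᵐ[μ] fun x => ((f : Ω → ℝ) x : ℂ) :=
    fun f => Complex.ofRealCLM.coeFn_compLp' f
  -- the full extension
  have hre : ∀ A : H →L[ℂ] H, IsSelfAdjoint (ℜ A : H →L[ℂ] H) := fun A => (ℜ A).2
  have him : ∀ A : H →L[ℂ] H, IsSelfAdjoint (ℑ A : H →L[ℂ] H) := fun A => (ℑ A).2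
  set F : (H →L[ℂ] H) → Lp ℂ ⊤ μ :=
    fun A => g (S1 (ℜ A : H →L[ℂ] H)) + Complex.I • g (S1 (ℑ A : H →L[ℂ] H)) with hFdef
  have hFadd : ∀ A B : H →L[ℂ] H, F (A + B) = F A + F B := by
    intro A B
    have e5 : S1 ((ℜ (A + B) : H →L[ℂ] H)) = S1 (ℜ A : H →L[ℂ] H) + S1 (ℜ B : H →L[ℂ] H) := by
      rw [map_add, AddSubgroup.coe_add]
      exact hS1add _ _ (hre A) (hre B)
    have e6 : S1 ((ℑ (A + B) : H →L[ℂ] H)) = S1 (ℑ A : H →L[ℂ] H) + S1 (ℑ B : H →L[ℂ] H) := by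
      rw [map_add, AddSubgroup.coe_add]
      exact hS1add _ _ (him A) (him B)
    show g (S1 (ℜ (A + B) : H →L[ℂ] H)) + Complex.I • g (S1 (ℑ (A + B) : H →L[ℂ] H)) = _
    rw [e5, e6, map_add, map_add, smul_add]
    exact add_add_add_comm _ _ _ _
  have hFsmul : ∀ (z : ℂ) (A : H →L[ℂ] H), F (z • A) = z • F A := by
    intro z A
    have h1 : S1 (ℜ (z • A) : H →L[ℂ] H) = z.re • S1 (ℜ A : H →L[ℂ] H)
        - z.im • S1 (ℑ A : H →L[ℂ] H) := by
      rw [realPart_smul]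
      rw [show ((z.re • ℜ A - z.im • ℑ A : selfAdjoint (H →L[ℂ] H)) : H →L[ℂ] H)
          = z.re • (ℜ A : H →L[ℂ] H) + (-z.im) • (ℑ A : H →L[ℂ] H) by
        push_cast; rw [neg_smul]; abel]
      rw [hS1add _ _ ((IsSelfAdjoint.all z.re).smul (hre A))
        ((IsSelfAdjoint.all (-z.im)).smul (him A)),
        hS1smulR _ (hre A), hS1smulR _ (him A), neg_smul, ← sub_eq_add_neg]
    have h2 : S1 (ℑ (z • A) : H →L[ℂ] H) = z.re • S1 (ℑ A : H →L[ℂ] H)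
        + z.im • S1 (ℜ A : H →L[ℂ] H) := by
      rw [imaginaryPart_smul]
      rw [show ((z.re • ℑ A + z.im • ℜ A : selfAdjoint (H →L[ℂ] H)) : H →L[ℂ] H)
          = z.re • (ℑ A : H →L[ℂ] H) + z.im • (ℜ A : H →L[ℂ] H) by push_cast; ring_nf]
      rw [hS1add _ _ ((IsSelfAdjoint.all z.re).smul (him A))
        ((IsSelfAdjoint.all z.im).smul (hre A)),
        hS1smulR _ (him A), hS1smulR _ (hre A)]
    show g (S1 (ℜ (z • A) : H →L[ℂ] H)) + Complex.I • g (S1 (ℑ (z • A) : H →L[ℂ] H))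
        = z • (g (S1 (ℜ A : H →L[ℂ] H)) + Complex.I • g (S1 (ℑ A : H →L[ℂ] H)))
    rw [h1, h2, map_sub, map_add, g.map_smul, g.map_smul, g.map_smul, g.map_smul]
    set a := g (S1 (ℜ A : H →L[ℂ] H))
    set b := g (S1 (ℑ A : H →L[ℂ] H))
    rw [← algebraMap_smul ℂ z.re a, ← algebraMap_smul ℂ z.im b,
      ← algebraMap_smul ℂ z.re b, ← algebraMap_smul ℂ z.im a]
    match_scalars <;> simp [Complex.ext_iff]
  -- F agrees with g ∘ S on positive operators
  have hFpos_eq : ∀ A : H →L[ℂ] H, A.IsPositive → F A = g (S A) := by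
    intro A hA
    have h1 : (ℜ A : H →L[ℂ] H) = A := hA.isSelfAdjoint.coe_realPart
    have h2 : ℑ A = 0 := hA.isSelfAdjoint.imaginaryPart
    show g (S1 (ℜ A : H →L[ℂ] H)) + Complex.I • g (S1 (ℑ A : H →L[ℂ] H)) = g (S A)
    rw [h1, h2, ZeroMemClass.coe_zero, hS1zero, map_zero, smul_zero, add_zero, hS1eq A hA]
  -- F extends T on effects, a.e.
  have hFeff : ∀ E : H →L[ℂ] H, IsEffect E →
      (F E : Ω → ℂ) =ᵐ[μ] fun x => ((T E : Ω → ℝ) x : ℂ) := by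
    intro E hE
    rw [hFpos_eq E hE.1, hSeff E hE]
    exact hg (T E)
  -- positivity
  have hFpos : ∀ A : H →L[ℂ] H, A.IsPositive → ∀ᵐ x ∂μ, 0 ≤ (F A : Ω → ℂ) x := by
    intro A hA
    have hc0 : (0:ℝ) < ‖A‖ + 1 := by positivity
    have hAc : ‖A‖ ≤ ‖A‖ + 1 := by linarith [norm_nonneg A]
    have hEeff := aux_eff_scale A hA (‖A‖ + 1) hc0 hAc
    have hSA : S A = (‖A‖ + 1) • T (((‖A‖ + 1 : ℝ):ℂ)⁻¹ • A) := hSc A hA _ hc0 hAc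
    filter_upwards [hg (S A), Lp.coeFn_smul (‖A‖ + 1 : ℝ) (T (((‖A‖ + 1 : ℝ):ℂ)⁻¹ • A)),
      (hTbound _ hEeff).1] with x hx1 hx2 hx3
    rw [hFpos_eq A hA, hx1, Complex.zero_le_real, hSA, hx2]
    simp only [Pi.smul_apply, smul_eq_mul]
    exact mul_nonneg (by positivity) hx3
  -- unitality
  have hFone : (F 1 : Ω → ℂ) =ᵐ[μ] fun _ => 1 := by
    filter_upwards [hFeff 1 aux_one_effect, hT1] with x hx1 hx2
    rw [hx1, hx2]
    norm_num
  refine ⟨{ toFun := F, map_add' := hFadd, map_smul' := hFsmul }, ?_, ?_, ?_⟩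
  · intro A hA
    exact hFpos A hA
  · exact hFone
  · intro E hE
    exact hFeff E hE
end

section
/- Let H be a nontrivial complex Hilbert space, (Ω, 𝒜) a measurable space, and P : 𝒜 → B(H) a PVM. Let n ∈ ℕ and K₁, …, K_n ∈ 𝒜. Then there exist m ∈ ℕ, pairwise disjoint sets X₀, X₁, …, X_m ∈ 𝒜 whose union is Ω, and unit vectors φ₀, …, φ_m ∈ H with P(X_i)φ_i = φ_i whenever P(X_i) ≠ 0, such that for every k ∈ {1, …, n}: P(K_k) = Σ_{i=0}^{m} ⟪φ_i, P(K_k) φ_i⟫ · P(X_i). In particular, every P(K_k) is a fixed point of the entanglement-breaking channel A ↦ Σ_{i=0}^{m} ⟪φ_i, A φ_i⟫ · P(X_i) on B(H). -/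
open MeasureTheory
open scoped ComplexInnerProductSpace

/-- A POVM on a measurable space `Ω` with values in `B(H)`: positive operator values,
normalization `M(Ω) = 1`, and weak countable additivity. -/
def IsPOVM {H : Type*} [NormedAddCommGroup H] [InnerProductSpace ℂ H] [CompleteSpace H]
    {Ω : Type*} [MeasurableSpace Ω] (M : Set Ω → (H →L[ℂ] H)) : Prop :=
  (∀ X : Set Ω, MeasurableSet X → (M X).IsPositive) ∧
  M Set.univ = 1 ∧
  ∀ (φ : H) (X : ℕ → Set Ω), (∀ n, MeasurableSet (X n)) →
    (Pairwise fun m n => Disjoint (X m) (X n)) →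
    HasSum (fun n => ⟪φ, M (X n) φ⟫) ⟪φ, M (⋃ n, X n) φ⟫

/-- A PVM: a POVM whose values are orthogonal projections and which is multiplicative. -/
def IsPVM {H : Type*} [NormedAddCommGroup H] [InnerProductSpace ℂ H] [CompleteSpace H]
    {Ω : Type*} [MeasurableSpace Ω] (P : Set Ω → (H →L[ℂ] H)) : Prop :=
  IsPOVM P ∧
  (∀ X : Set Ω, MeasurableSet X → IsSelfAdjoint (P X) ∧ P X * P X = P X) ∧
  ∀ X Y : Set Ω, MeasurableSet X → MeasurableSet Y → P (X ∩ Y) = P X * P Y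

section Aux

variable {H : Type*} [NormedAddCommGroup H] [InnerProductSpace ℂ H] [CompleteSpace H]
  {Ω : Type*} [MeasurableSpace Ω] {P : Set Ω → (H →L[ℂ] H)}

/-- Weak equality implies equality for operators on a complex Hilbert space. -/
theorem pvm_cext (S T : H →L[ℂ] H) (h : ∀ x, ⟪x, S x⟫ = ⟪x, T x⟫) : S = T := by
  have h2 : (S : H →ₗ[ℂ] H) = (T : H →ₗ[ℂ] H) := by
    rw [← ext_inner_map]
    intro x
    simp only [ContinuousLinearMap.coe_coe]
    rw [← inner_conj_symm (S x) x, ← inner_conj_symm (T x) x]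
    exact congrArg (starRingEnd ℂ) (h x)
  ext x; exact congrFun (congrArg DFunLike.coe h2) x

theorem pvm_empty (hP : IsPVM P) : P ∅ = 0 := by
  apply pvm_cext; intro φ
  have hsum := hP.1.2.2 φ (fun _ => (∅ : Set Ω)) (fun _ => MeasurableSet.empty)
    (fun i j _ => by simp)
  simp only [Set.iUnion_empty] at hsum
  have h0 : ⟪φ, P ∅ φ⟫ = 0 := by
    have h1 := hsum.summable.tendsto_atTop_zero
    exact tendsto_nhds_unique tendsto_const_nhds h1
  simpa using h0

theorem pvm_union (hP : IsPVM P) {A B : Set Ω} (hA : MeasurableSet A)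
    (hB : MeasurableSet B) (hd : Disjoint A B) : P (A ∪ B) = P A + P B := by
  apply pvm_cext; intro φ
  set X : ℕ → Set Ω := fun j => if j = 0 then A else if j = 1 then B else ∅ with hX
  have hmeas : ∀ j, MeasurableSet (X j) := by
    intro j; simp only [hX]
    split
    · exact hA
    · split
      · exact hB
      · exact MeasurableSet.empty
  have hpair : Pairwise fun i j => Disjoint (X i) (X j) := by
    intro i j hij
    simp only [hX]
    split_ifs <;> simp_all [hd, hd.symm]
  have hsum := hP.1.2.2 φ X hmeas hpair
  have hU : (⋃ j, X j) = A ∪ B := by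
    ext ω
    simp only [Set.mem_iUnion, hX]
    constructor
    · rintro ⟨j, hj⟩
      by_cases h0 : j = 0
      · left; simpa [h0] using hj
      · by_cases h1 : j = 1
        · right; simpa [h0, h1] using hj
        · simp [h0, h1] at hj
    · rintro (h | h)
      · exact ⟨0, by simpa using h⟩
      · exact ⟨1, by simpa using h⟩
  rw [hU] at hsum
  have h2 : HasSum (fun j => ⟪φ, P (X j) φ⟫) (∑ j ∈ ({0, 1} : Finset ℕ), ⟪φ, P (X j) φ⟫) := by
    apply hasSum_sum_of_ne_finset_zero
    intro j hj
    simp only [Finset.mem_insert, Finset.mem_singleton, not_or] at hj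
    simp [hX, hj.1, hj.2, pvm_empty hP]
  have := hsum.unique h2
  rw [this]
  simp [hX, inner_add_right]

theorem pvm_biUnion (hP : IsPVM P) {ι : Type*} [DecidableEq ι] (s : Finset ι)
    (X : ι → Set Ω) (hm : ∀ i, MeasurableSet (X i))
    (hd : ∀ i ∈ s, ∀ j ∈ s, i ≠ j → Disjoint (X i) (X j)) :
    P (⋃ i ∈ s, X i) = ∑ i ∈ s, P (X i) := by
  induction s using Finset.induction with
  | empty => simpa using pvm_empty hP
  | @insert a t ha ih =>
    have hdis : Disjoint (X a) (⋃ i ∈ t, X i) := by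
      rw [Set.disjoint_iUnion_right]
      intro i
      rw [Set.disjoint_iUnion_right]
      intro hi
      exact hd a (Finset.mem_insert_self a t) i (Finset.mem_insert_of_mem hi)
        (fun h => ha (h ▸ hi))
    rw [Finset.set_biUnion_insert, Finset.sum_insert ha,
      pvm_union hP (hm a) (t.measurableSet_biUnion (fun i _ => hm i)) hdis,
      ih (fun i hi j hj hij => hd i (Finset.mem_insert_of_mem hi) j
        (Finset.mem_insert_of_mem hj) hij)]

end Aux


/-- Given a PVM `P` and finitely many measurable sets `K₁, …, Kₙ`, there is a finite
measurable partition `X₀, …, X_m` of `Ω` and unit vectors `φ₀, …, φ_m` supported by the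
`P(Xᵢ)`, such that every `P(K_k)` is a fixed point of the entanglement-breaking channel
`A ↦ Σᵢ ⟪φᵢ, A φᵢ⟫ P(Xᵢ)`. -/
theorem stmt9 {H : Type*} [NormedAddCommGroup H] [InnerProductSpace ℂ H] [CompleteSpace H]
    [Nontrivial H]
    {Ω : Type*} [MeasurableSpace Ω] (P : Set Ω → (H →L[ℂ] H)) (hP : IsPVM P)
    (n : ℕ) (K : Fin n → Set Ω) (hK : ∀ k, MeasurableSet (K k)) :
    ∃ (m : ℕ) (X : Fin (m + 1) → Set Ω) (φ : Fin (m + 1) → H),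
      (∀ i, MeasurableSet (X i)) ∧
      (Pairwise fun i j => Disjoint (X i) (X j)) ∧
      (⋃ i, X i) = Set.univ ∧
      (∀ i, ‖φ i‖ = 1) ∧
      (∀ i, P (X i) ≠ 0 → P (X i) (φ i) = φ i) ∧
      ∀ k : Fin n, P (K k) = ∑ i, ⟪φ i, P (K k) (φ i)⟫ • P (X i) := by
  classical
  obtain ⟨v, hv⟩ := exists_ne (0 : H)
  set m := 2 ^ n - 1 with hm
  have hcard : Fintype.card (Fin n → Bool) = m + 1 := by
    have h2 : 0 < 2 ^ n := Nat.pow_pos (by norm_num)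
    rw [Fintype.card_fun, Fintype.card_bool, Fintype.card_fin, hm]
    omega
  let e : Fin (m + 1) ≃ (Fin n → Bool) := (Fintype.equivFinOfCardEq hcard).symm
  set S : (Fin n → Bool) → Set Ω := fun s => ⋂ k, if s k then K k else (K k)ᶜ with hS
  set X : Fin (m + 1) → Set Ω := fun i => S (e i) with hXdef
  have hSmem : ∀ (ω : Ω) (s : Fin n → Bool), ω ∈ S s ↔ ∀ k, if s k then ω ∈ K k else ω ∉ K k := by
    intro ω s
    simp only [hS, Set.mem_iInter]
    constructor
    · intro h k
      have := h k
      split at this <;> split <;> simp_all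
    · intro h k
      have := h k
      split at this <;> split <;> simp_all
  have hXmeas : ∀ i, MeasurableSet (X i) := by
    intro i
    apply MeasurableSet.iInter
    intro k
    split
    · exact hK k
    · exact (hK k).compl
  have hSd : ∀ s t : Fin n → Bool, s ≠ t → Disjoint (S s) (S t) := by
    intro s t hst
    obtain ⟨k, hk⟩ := Function.ne_iff.mp hst
    rw [Set.disjoint_left]
    intro ω hωs hωt
    have h1 := (hSmem ω s).mp hωs k
    have h2 := (hSmem ω t).mp hωt k
    cases hsk : s k <;> cases htk : t k <;> simp_all
  have hpair : Pairwise fun i j => Disjoint (X i) (X j) := by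
    intro i j hij
    exact hSd _ _ (fun h => hij (e.injective h))
  have hcover : ∀ ω : Ω, ω ∈ S (fun k => decide (ω ∈ K k)) := by
    intro ω
    rw [hSmem]
    intro k
    by_cases h : ω ∈ K k <;> simp [h]
  have hunion : (⋃ i, X i) = Set.univ := by
    ext ω
    simp only [Set.mem_iUnion, Set.mem_univ, iff_true]
    exact ⟨e.symm (fun k => decide (ω ∈ K k)), by
      simpa only [hXdef, Equiv.apply_symm_apply] using hcover ω⟩
  have hφex : ∀ i, ∃ φ : H, ‖φ‖ = 1 ∧ (P (X i) ≠ 0 → P (X i) φ = φ) := by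
    intro i
    by_cases h0 : P (X i) = 0
    · exact ⟨‖v‖⁻¹ • v, norm_smul_inv_norm hv, fun h => absurd h0 h⟩
    · obtain ⟨w, hw⟩ : ∃ w, P (X i) w ≠ 0 := by
        by_contra hc
        push_neg at hc
        exact h0 (ContinuousLinearMap.ext fun w => by simp [hc w])
      refine ⟨‖P (X i) w‖⁻¹ • P (X i) w, norm_smul_inv_norm hw, fun _ => ?_⟩
      have hidem := (hP.2.1 (X i) (hXmeas i)).2
      have h2 : P (X i) (P (X i) w) = P (X i) w := by
        have := congrFun (congrArg DFunLike.coe hidem) w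
        simpa [ContinuousLinearMap.mul_apply] using this
      rw [ContinuousLinearMap.map_smul_of_tower, h2]
  choose φ hφ1 hφ2 using hφex
  refine ⟨m, X, φ, hXmeas, hpair, hunion, hφ1, hφ2, ?_⟩
  intro k
  have hsub : ∀ s : Fin n → Bool, s k = true → S s ⊆ K k := by
    intro s hs ω hω
    have := (hSmem ω s).mp hω k
    simpa [hs] using this
  have hdisjK : ∀ s : Fin n → Bool, s k = false → K k ∩ S s = ∅ := by
    intro s hs
    ext ω
    simp only [Set.mem_inter_iff, Set.mem_empty_iff_false, iff_false, not_and]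
    intro hωK hωS
    have := (hSmem ω s).mp hωS k
    simp [hs] at this
    exact this hωK
  have hterm : ∀ i, ⟪φ i, P (K k) (φ i)⟫ • P (X i) =
      if e i k = true then P (X i) else 0 := by
    intro i
    by_cases h0 : P (X i) = 0
    · rw [h0]; split <;> simp [h0]
    · have hfix := hφ2 i h0
      have hKX : P (K k) (φ i) = P (K k ∩ X i) (φ i) := by
        rw [hP.2.2 (K k) (X i) (hK k) (hXmeas i), ContinuousLinearMap.mul_apply, hfix]
      by_cases hsk : e i k = true
      · have hXK : K k ∩ X i = X i :=
          Set.inter_eq_self_of_subset_right (hsub _ hsk)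
        rw [if_pos hsk, hKX, hXK, hfix]
        have : ⟪φ i, φ i⟫ = (1 : ℂ) := by
          rw [inner_self_eq_norm_sq_to_K, hφ1 i]
          norm_num
        rw [this, one_smul]
      · have hXK : K k ∩ X i = ∅ := hdisjK _ (by simpa using hsk)
        rw [if_neg hsk, hKX, hXK, pvm_empty hP]
        simp
  rw [Finset.sum_congr rfl (fun i _ => hterm i), ← Finset.sum_filter]
  have hUK : (⋃ i ∈ Finset.univ.filter (fun i => e i k = true), X i) = K k := by
    ext ω
    simp only [Set.mem_iUnion, Finset.mem_filter, Finset.mem_univ, true_and]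
    constructor
    · rintro ⟨i, hi, hω⟩
      exact hsub _ hi hω
    · intro hω
      refine ⟨e.symm (fun k' => decide (ω ∈ K k')), ?_, ?_⟩
      · simp [Equiv.apply_symm_apply, hω]
      · simpa only [hXdef, Equiv.apply_symm_apply] using hcover ω
  rw [← hUK, pvm_biUnion hP _ X hXmeas
    (fun i _ j _ hij => hpair hij)]
end
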